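/- arXiv:2411.19294 — 4 statements merged into one kernel-verified Lean document; each statement's English description precedes it below -/
import Mathlib

section
/- For each natural number r and i ∈ {0,1}, the exponential generating function of (D_r^{(i)}(n))_{n≥0} is F_r^{(i)}(x) = (1/2)(x^r e^{−x}/(1−x)^{r+1} + (−1)^{r+i} x^r e^{−x}/(1+x)^{r−1}) as formal power series. -/
open scoped Classical

/-- Parity of a permutation: `0` if even, `1` if odd. -/
noncomputable def parity {α : Type*} [Fintype α] [DecidableEq α] (σ : Equiv.Perm α) : ℕ :=
  if Equiv.Perm.sign σ = 1 then 0 else 1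

/-- The set `𝒟(r,u,m,n)`: permutations `σ` of `{0,…,r+n-1}` (modelling `{1,…,r+n}`,
with the first `r` elements playing the role of `{1,…,r}`) such that `σ x = y` for exactly
`u` pairs `(x,y)` with `x, y` among the first `r` elements, and exactly `m` elements among
the last `n` elements are fixed points. -/
noncomputable def Dgen (r u m n : ℕ) : Finset (Equiv.Perm (Fin (r + n))) :=
  Finset.univ.filter (fun σ =>
    ((Finset.univ : Finset (Fin (r + n))).filter
      (fun x : Fin (r + n) => (x : ℕ) < r ∧ ((σ x : ℕ) < r))).card = u ∧
    ((Finset.univ : Finset (Fin (r + n))).filter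
      (fun t : Fin (r + n) => r ≤ (t : ℕ) ∧ σ t = t)).card = m)

/-- The set `𝒟_{r,u,m}(n)`: permutations `σ` of `{0,…,r+n-1}` in which any two distinct
elements among the first `r` lie in disjoint cycles, exactly `u` of the first `r` elements
are fixed points, and exactly `m` of the last `n` elements are fixed points. -/
noncomputable def Drum (r u m n : ℕ) : Finset (Equiv.Perm (Fin (r + n))) :=
  Finset.univ.filter (fun σ =>
    (∀ x y : Fin (r + n), (x : ℕ) < r → (y : ℕ) < r → x ≠ y → ¬ σ.SameCycle x y) ∧
    ((Finset.univ : Finset (Fin (r + n))).filter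
      (fun z : Fin (r + n) => (z : ℕ) < r ∧ σ z = z)).card = u ∧
    ((Finset.univ : Finset (Fin (r + n))).filter
      (fun t : Fin (r + n) => r ≤ (t : ℕ) ∧ σ t = t)).card = m)

/-- The number of disjoint cycles of `σ` containing at least one of the first `r` elements:
we count the distinct sets `{y : y is in the same cycle of σ as x}` for `x` among the
first `r` elements. -/
noncomputable def touchingCycles (r n : ℕ) (σ : Equiv.Perm (Fin (r + n))) : ℕ :=
  (((Finset.univ : Finset (Fin (r + n))).filter (fun x : Fin (r + n) => (x : ℕ) < r)).image
    (fun x => (Finset.univ : Finset (Fin (r + n))).filter (fun y => σ.SameCycle x y))).card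

/-- The set of `r`-derangements of length `r+n`: fixed-point-free permutations in which
any two distinct elements among the first `r` lie in disjoint cycles. -/
noncomputable def rDerSet (r n : ℕ) : Finset (Equiv.Perm (Fin (r + n))) :=
  Finset.univ.filter (fun σ =>
    (∀ x, σ x ≠ x) ∧
    (∀ x y : Fin (r + n), (x : ℕ) < r → (y : ℕ) < r → x ≠ y → ¬ σ.SameCycle x y))

/-- `D_r(n)`, the number of `r`-derangements. -/
noncomputable def Dr (r n : ℕ) : ℕ := (rDerSet r n).card

/-- `D_r^{(i)}(n)`, the number of `r`-derangements of parity `i`. -/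
noncomputable def Dri (r i n : ℕ) : ℕ :=
  ((rDerSet r n).filter (fun σ => parity σ = i)).card


set_option linter.unusedSectionVars false
set_option linter.unusedVariables false
set_option maxHeartbeats 1600000

open Equiv Equiv.Perm Finset PowerSeries

section RDerangementEGF

variable {α : Type*} [Fintype α] [DecidableEq α] {β : Type*} [Fintype β] [DecidableEq β]

noncomputable def DD (S A : Finset α) : Finset (Equiv.Perm α) :=
  Finset.univ.filter (fun σ =>
    (∀ x ∈ S ∪ A, σ x ≠ x) ∧ (∀ x, x ∉ S ∪ A → σ x = x) ∧
    ∀ x ∈ S, ∀ y ∈ S, x ≠ y → ¬ σ.SameCycle x y)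

lemma mem_DD {S A : Finset α} {σ : Equiv.Perm α} :
    σ ∈ DD S A ↔ (∀ x ∈ S ∪ A, σ x ≠ x) ∧ (∀ x, x ∉ S ∪ A → σ x = x) ∧
      ∀ x ∈ S, ∀ y ∈ S, x ≠ y → ¬ σ.SameCycle x y := by
  simp [DD]

lemma sameCycle_iff_nat (σ : Equiv.Perm α) (x y : α) :
    σ.SameCycle x y ↔ ∃ k : ℕ, (σ ^ k) x = y := by
  constructor
  · intro h; obtain ⟨i, _, h⟩ := h.exists_pow_eq'; exact ⟨i, h⟩
  · rintro ⟨k, rfl⟩; exact ⟨(k : ℤ), by simp [zpow_natCast]⟩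

lemma permPow_succ_apply (τ : Equiv.Perm α) (n : ℕ) (x : α) :
    (τ ^ (n + 1)) x = τ ((τ ^ n) x) := by
  rw [pow_succ', Equiv.Perm.mul_apply]

section splice
variable {σ : Equiv.Perm α} {a b : α}

lemma pow_ne_of_fix (τ : Equiv.Perm α) (hb : τ b = b) {x : α} (hx : x ≠ b) (k : ℕ) :
    (τ ^ k) x ≠ b := by
  have hbk : ∀ j : ℕ, (τ ^ j) b = b := by
    intro j
    induction j with
    | zero => rfl
    | succ n ih => rw [permPow_succ_apply, ih, hb]
  intro h
  exact hx ((τ ^ k).injective (h.trans (hbk k).symm))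

lemma splice_fix (hba : σ b = a) : (Equiv.swap a b * σ) b = b := by
  simp [Equiv.Perm.mul_apply, hba]

/-- orbit comparison, direction 1 -/
lemma splice_orbit1 (hba : σ b = a) {x : α} (hx : x ≠ b) (k : ℕ) :
    ∃ m : ℕ, ((Equiv.swap a b * σ) ^ k) x = (σ ^ m) x := by
  induction k with
  | zero => exact ⟨0, rfl⟩
  | succ n ih =>
    obtain ⟨m, hm⟩ := ih
    rw [permPow_succ_apply, hm, Equiv.Perm.mul_apply, ← permPow_succ_apply]
    by_cases h1 : (σ ^ (m+1)) x = b
    · refine ⟨m + 2, ?_⟩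
      rw [h1, Equiv.swap_apply_right, permPow_succ_apply (n := m+1), h1, hba]
    · by_cases h2 : (σ ^ (m+1)) x = a
      · exfalso
        have hne := pow_ne_of_fix (Equiv.swap a b * σ) (splice_fix hba) hx n
        rw [hm] at hne
        have : (σ ^ m) x = b := σ.injective (by rw [← permPow_succ_apply, h2, hba])
        exact hne this
      · exact ⟨m + 1, Equiv.swap_apply_of_ne_of_ne h2 h1⟩

/-- orbit comparison, direction 2 -/
lemma splice_orbit2 (hab : a ≠ b) (hba : σ b = a) {x : α} (hx : x ≠ b) (m : ℕ) :
    ∃ k : ℕ, ((Equiv.swap a b * σ) ^ k) x = (σ ^ m) x ∨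
      ((σ ^ m) x = b ∧ ((Equiv.swap a b * σ) ^ k) x = a) := by
  induction m with
  | zero => exact ⟨0, Or.inl rfl⟩
  | succ n ih =>
    obtain ⟨k, hk | ⟨hb', ha'⟩⟩ := ih
    · by_cases h1 : (σ ^ (n+1)) x = b
      · refine ⟨k + 1, Or.inr ⟨h1, ?_⟩⟩
        rw [permPow_succ_apply, hk, Equiv.Perm.mul_apply, ← permPow_succ_apply, h1,
          Equiv.swap_apply_right]
      · by_cases h2 : (σ ^ (n+1)) x = a
        · exfalso
          have hne := pow_ne_of_fix (Equiv.swap a b * σ) (splice_fix hba) hx k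
          rw [hk] at hne
          have : (σ ^ n) x = b := σ.injective (by rw [← permPow_succ_apply, h2, hba])
          exact hne this
        · refine ⟨k + 1, Or.inl ?_⟩
          rw [permPow_succ_apply, hk, Equiv.Perm.mul_apply, ← permPow_succ_apply]
          exact Equiv.swap_apply_of_ne_of_ne h2 h1
    · exact ⟨k, Or.inl (by rw [ha', permPow_succ_apply, hb', hba])⟩

lemma splice_sameCycle (hab : a ≠ b) (hba : σ b = a) {x y : α} (hx : x ≠ b) (hy : y ≠ b) :
    (Equiv.swap a b * σ).SameCycle x y ↔ σ.SameCycle x y := by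
  rw [sameCycle_iff_nat, sameCycle_iff_nat]
  constructor
  · rintro ⟨k, rfl⟩; obtain ⟨m, hm⟩ := splice_orbit1 hba hx k; exact ⟨m, hm.symm⟩
  · rintro ⟨m, rfl⟩
    obtain ⟨k, hk | ⟨hb', _⟩⟩ := splice_orbit2 hab hba hx m
    · exact ⟨k, hk⟩
    · exact absurd hb' hy

end splice


noncomputable def wgt (u : ℤ) (σ : Equiv.Perm α) : ℤ :=
  if Equiv.Perm.sign σ = 1 then 1 else u

noncomputable def FF (u : ℤ) (S A : Finset α) : ℤ := ∑ σ ∈ DD S A, wgt u σ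

section members
variable {S A : Finset α} {a b : α} {σ τ : Equiv.Perm α}




lemma pair_orbit (h1 : σ a = b) (h2 : σ b = a) (k : ℕ) :
    (σ ^ k) a = a ∨ (σ ^ k) a = b := by
  induction k with
  | zero => exact Or.inl rfl
  | succ n ih =>
    rcases ih with h | h
    · right; rw [permPow_succ_apply, h, h1]
    · left; rw [permPow_succ_apply, h, h2]

lemma uErase_union (hbS : b ∉ S) : S ∪ A.erase b = (S ∪ A).erase b := by
  ext x
  simp only [Finset.mem_union, Finset.mem_erase]
  constructor
  · rintro (h | ⟨h1, h2⟩)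
    · exact ⟨fun he => hbS (he ▸ h), Or.inl h⟩
    · exact ⟨h1, Or.inr h2⟩
  · rintro ⟨h1, h | h⟩
    · exact Or.inl h
    · exact Or.inr ⟨h1, h⟩

lemma spliceA_mem (hd : Disjoint S A) (haSA : a ∈ S ∪ A) (hb : b ∈ A) (hab : a ≠ b)
    (hσ : σ ∈ DD S A) (hba : σ b = a) (hnab : σ a ≠ b) :
    Equiv.swap a b * σ ∈ DD S (A.erase b) := by
  have hbS : b ∉ S := fun h => (Finset.disjoint_left.mp hd h) hb
  rw [mem_DD] at hσ ⊢
  obtain ⟨h1, h2, h3⟩ := hσ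
  refine ⟨?_, ?_, ?_⟩
  · intro x hx
    rw [uErase_union hbS, Finset.mem_erase] at hx
    obtain ⟨hxb, hxSA⟩ := hx
    simp only [Equiv.Perm.mul_apply]
    rcases eq_or_ne (σ x) a with h | h
    · exact fun _ => hxb (σ.injective (h.trans hba.symm))
    · rcases eq_or_ne (σ x) b with h' | h'
      · rw [h', Equiv.swap_apply_right]
        intro hax; subst hax; exact hnab h'
      · rw [Equiv.swap_apply_of_ne_of_ne h h']
        exact h1 x hxSA
  · intro x hx
    rw [uErase_union hbS, Finset.mem_erase] at hx
    push_neg at hx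
    rcases eq_or_ne x b with rfl | hxb
    · simp [Equiv.Perm.mul_apply, hba]
    · have hxSA : x ∉ S ∪ A := hx hxb
      have hxa : x ≠ a := fun h => hxSA (h ▸ haSA)
      simp only [Equiv.Perm.mul_apply, h2 x hxSA]
      exact Equiv.swap_apply_of_ne_of_ne hxa hxb
  · intro x hx y hy hxy
    rw [splice_sameCycle hab hba (fun h => hbS (h ▸ hx)) (fun h => hbS (h ▸ hy))]
    exact h3 x hx y hy hxy

lemma spliceA_inv_mem (hd : Disjoint S A) (haSA : a ∈ S ∪ A) (hb : b ∈ A) (hab : a ≠ b)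
    (hτ : τ ∈ DD S (A.erase b)) :
    Equiv.swap a b * τ ∈ DD S A ∧ (Equiv.swap a b * τ) b = a ∧ (Equiv.swap a b * τ) a ≠ b := by
  have hbS : b ∉ S := fun h => (Finset.disjoint_left.mp hd h) hb
  rw [mem_DD] at hτ
  obtain ⟨h1, h2, h3⟩ := hτ
  have hbout : b ∉ S ∪ A.erase b := by simp [hbS]
  have hτb : τ b = b := h2 b hbout
  have hσb : (Equiv.swap a b * τ) b = a := by
    simp [Equiv.Perm.mul_apply, hτb]
  have haU : a ∈ S ∪ A.erase b := by
    rw [uErase_union hbS, Finset.mem_erase]; exact ⟨hab, haSA⟩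
  have hτa : τ a ≠ a := h1 a haU
  have hτab : τ a ≠ b := fun h => hab (τ.injective (by rw [h, hτb]))
  have hσa : (Equiv.swap a b * τ) a ≠ b := by
    simp only [Equiv.Perm.mul_apply]
    intro h
    rcases eq_or_ne (τ a) a with h' | h'
    · exact hτa h'
    · rw [Equiv.swap_apply_of_ne_of_ne h' hτab] at h; exact hτab h
  refine ⟨?_, hσb, hσa⟩
  rw [mem_DD]
  refine ⟨?_, ?_, ?_⟩
  · intro x hx
    rcases eq_or_ne x b with rfl | hxb
    · rw [hσb]; exact hab
    · have hxU : x ∈ S ∪ A.erase b := by rw [uErase_union hbS, Finset.mem_erase]; exact ⟨hxb, hx⟩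
      simp only [Equiv.Perm.mul_apply]
      rcases eq_or_ne (τ x) a with h | h
      · rw [h, Equiv.swap_apply_left]; exact fun hbx => hxb hbx.symm
      · have h' : τ x ≠ b := fun hh => hxb (τ.injective (by rw [hh, hτb]))
        rw [Equiv.swap_apply_of_ne_of_ne h h']
        exact h1 x hxU
  · intro x hx
    have hxb : x ≠ b := fun h => hx (h ▸ Finset.mem_union_right _ hb)
    have hxa : x ≠ a := fun h => hx (h ▸ haSA)
    have hxU : x ∉ S ∪ A.erase b := by
      rw [uErase_union hbS, Finset.mem_erase]; push_neg; intro _; exact hx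
    simp only [Equiv.Perm.mul_apply, h2 x hxU]
    exact Equiv.swap_apply_of_ne_of_ne hxa hxb
  · intro x hx y hy hxy
    have hxb : x ≠ b := fun h => hbS (h ▸ hx)
    have hyb : y ≠ b := fun h => hbS (h ▸ hy)
    have key : (Equiv.swap a b * (Equiv.swap a b * τ)) = τ := by
      rw [← mul_assoc, Equiv.swap_mul_self, one_mul]
    rw [← splice_sameCycle hab hσb hxb hyb, key]
    exact h3 x hx y hy hxy



lemma eraseB_union (hbS : b ∉ S) (haA' : a ∉ A → a ∈ S) :
    S.erase a ∪ (A.erase b).erase a = ((S ∪ A).erase b).erase a := by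
  ext x
  simp only [Finset.mem_union, Finset.mem_erase]
  constructor
  · rintro (⟨h1, h2⟩ | ⟨h1, h2, h3⟩)
    · exact ⟨h1, fun he => hbS (he ▸ h2), Or.inl h2⟩
    · exact ⟨h1, h2, Or.inr h3⟩
  · rintro ⟨h1, h2, h3 | h3⟩
    · exact Or.inl ⟨h1, h3⟩
    · exact Or.inr ⟨h1, h2, h3⟩

lemma spliceB_mem (hd : Disjoint S A) (haSA : a ∈ S ∪ A) (hb : b ∈ A) (hab : a ≠ b)
    (hσ : σ ∈ DD S A) (hba : σ b = a) (hab2 : σ a = b) :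
    Equiv.swap a b * σ ∈ DD (S.erase a) ((A.erase b).erase a) := by
  have hbS : b ∉ S := fun h => (Finset.disjoint_left.mp hd h) hb
  have haA' : a ∉ A → a ∈ S := fun h => (Finset.mem_union.mp haSA).resolve_right h
  rw [mem_DD] at hσ ⊢
  obtain ⟨h1, h2, h3⟩ := hσ
  refine ⟨?_, ?_, ?_⟩
  · intro x hx
    rw [eraseB_union hbS haA', Finset.mem_erase, Finset.mem_erase] at hx
    obtain ⟨hxa, hxb, hxSA⟩ := hx
    have hsa : σ x ≠ a := fun h => hxb (σ.injective (h.trans hba.symm))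
    have hsb : σ x ≠ b := fun h => hxa (σ.injective (h.trans hab2.symm))
    simp only [Equiv.Perm.mul_apply, Equiv.swap_apply_of_ne_of_ne hsa hsb]
    exact h1 x hxSA
  · intro x hx
    rw [eraseB_union hbS haA', Finset.mem_erase, Finset.mem_erase] at hx
    push_neg at hx
    rcases eq_or_ne x a with rfl | hxa
    · simp [Equiv.Perm.mul_apply, hab2]
    · rcases eq_or_ne x b with rfl | hxb
      · simp [Equiv.Perm.mul_apply, hba]
      · have hxSA : x ∉ S ∪ A := hx hxa hxb
        simp only [Equiv.Perm.mul_apply, h2 x hxSA]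
        exact Equiv.swap_apply_of_ne_of_ne hxa hxb
  · intro x hx y hy hxy
    rw [Finset.mem_erase] at hx hy
    rw [splice_sameCycle hab hba (fun h => hbS (h ▸ hx.2)) (fun h => hbS (h ▸ hy.2))]
    exact h3 x hx.2 y hy.2 hxy

lemma spliceB_inv_mem (hd : Disjoint S A) (haSA : a ∈ S ∪ A) (hb : b ∈ A) (hab : a ≠ b)
    (hτ : τ ∈ DD (S.erase a) ((A.erase b).erase a)) :
    Equiv.swap a b * τ ∈ DD S A ∧ (Equiv.swap a b * τ) b = a ∧ (Equiv.swap a b * τ) a = b := by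
  have hbS : b ∉ S := fun h => (Finset.disjoint_left.mp hd h) hb
  have haA' : a ∉ A → a ∈ S := fun h => (Finset.mem_union.mp haSA).resolve_right h
  rw [mem_DD] at hτ
  obtain ⟨h1, h2, h3⟩ := hτ
  have hU : ∀ x, x ∈ S.erase a ∪ (A.erase b).erase a ↔ (x ≠ a ∧ x ≠ b ∧ x ∈ S ∪ A) := by
    intro x
    rw [eraseB_union hbS haA', Finset.mem_erase, Finset.mem_erase]
  have hτa : τ a = a := h2 a (by rw [hU]; tauto)
  have hτb : τ b = b := h2 b (by rw [hU]; tauto)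
  have hσa : (Equiv.swap a b * τ) a = b := by simp [Equiv.Perm.mul_apply, hτa]
  have hσb : (Equiv.swap a b * τ) b = a := by simp [Equiv.Perm.mul_apply, hτb]
  refine ⟨?_, hσb, hσa⟩
  rw [mem_DD]
  refine ⟨?_, ?_, ?_⟩
  · intro x hx
    rcases eq_or_ne x a with rfl | hxa
    · rw [hσa]; exact fun h => hab h.symm
    · rcases eq_or_ne x b with rfl | hxb
      · rw [hσb]; exact hab
      · have hxU : x ∈ S.erase a ∪ (A.erase b).erase a := by rw [hU]; exact ⟨hxa, hxb, hx⟩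
        have h' : τ x ≠ a := fun hh => hxa (τ.injective (by rw [hh, hτa]))
        have h'' : τ x ≠ b := fun hh => hxb (τ.injective (by rw [hh, hτb]))
        simp only [Equiv.Perm.mul_apply, Equiv.swap_apply_of_ne_of_ne h' h'']
        exact h1 x hxU
  · intro x hx
    have hxa : x ≠ a := fun h => hx (h ▸ haSA)
    have hxb : x ≠ b := fun h => hx (h ▸ Finset.mem_union_right _ hb)
    have hxU : x ∉ S.erase a ∪ (A.erase b).erase a := by rw [hU]; push_neg; intro _ _; exact hx
    simp only [Equiv.Perm.mul_apply, h2 x hxU]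
    exact Equiv.swap_apply_of_ne_of_ne hxa hxb
  · intro x hx y hy hxy
    have hxb : x ≠ b := fun h => hbS (h ▸ hx)
    have hyb : y ≠ b := fun h => hbS (h ▸ hy)
    set σ := Equiv.swap a b * τ with hσdef
    have key : Equiv.swap a b * σ = τ := by
      rw [hσdef, ← mul_assoc, Equiv.swap_mul_self, one_mul]
    have claim : ∀ z, z ≠ a → z ≠ b → ¬ σ.SameCycle a z := by
      intro z hza hzb
      rw [sameCycle_iff_nat]
      rintro ⟨k, hk⟩
      rcases pair_orbit hσa hσb k with h | h
      · rw [hk] at h; exact hza h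
      · rw [hk] at h; exact hzb h
    rcases eq_or_ne x a with rfl | hxa
    · exact claim y (Ne.symm hxy) hyb
    · rcases eq_or_ne y a with rfl | hya
      · exact fun h => claim x hxa hxb h.symm
      · have hiff := splice_sameCycle hab hσb hxb hyb
        rw [key] at hiff
        exact fun h => h3 x (Finset.mem_erase.mpr ⟨hxa, hx⟩) y (Finset.mem_erase.mpr ⟨hya, hy⟩)
          hxy (hiff.mpr h)



end members


lemma wgt_swap_mul {u : ℤ} (hu : u * u = 1) {a b : α} (hab : a ≠ b) (σ : Equiv.Perm α) :
    wgt u (Equiv.swap a b * σ) = u * wgt u σ := by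
  have hs : Equiv.Perm.sign (Equiv.swap a b * σ) = - Equiv.Perm.sign σ := by
    rw [Equiv.Perm.sign_mul, Equiv.Perm.sign_swap hab, neg_one_mul]
  rcases Int.units_eq_one_or (Equiv.Perm.sign σ) with h | h
  · rw [wgt, wgt, h, hs, h]
    norm_num
  · rw [wgt, wgt, h, hs, h]
    norm_num [hu]

lemma swap_mul_invol {a b : α} (σ : Equiv.Perm α) :
    Equiv.swap a b * (Equiv.swap a b * σ) = σ := by
  rw [← mul_assoc, Equiv.swap_mul_self, one_mul]

lemma DD_maps_to {S A : Finset α} (hd : Disjoint S A) {a : α} (haSA : a ∈ S ∪ A)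
    (hC : ∀ σ ∈ DD S A, ∀ x ∈ S, σ x = a → x = a) :
    ∀ σ ∈ DD S A, σ⁻¹ a ∈ A.erase a := by
  intro σ hσ
  obtain ⟨h1, h2, h3⟩ := mem_DD.mp hσ
  have hba : σ (σ⁻¹ a) = a := σ.apply_symm_apply a
  have hne : σ⁻¹ a ≠ a := by
    intro h
    have : σ a = a := by nth_rewrite 1 [← h]; exact hba
    exact h1 a haSA this
  have hmem : σ⁻¹ a ∈ S ∪ A := by
    by_contra h
    have := h2 _ h
    rw [hba] at this
    exact hne this.symm
  have hnS : σ⁻¹ a ∉ S := fun h => hne (hC σ hσ _ h hba)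
  exact Finset.mem_erase.mpr ⟨hne, (Finset.mem_union.mp hmem).resolve_left hnS⟩

theorem FF_rec {u : ℤ} (hu : u * u = 1) (S A : Finset α) (hd : Disjoint S A) (a : α)
    (haSA : a ∈ S ∪ A) (hC : ∀ σ ∈ DD S A, ∀ x ∈ S, σ x = a → x = a) :
    FF u S A = ∑ b ∈ A.erase a,
      u * (FF u S (A.erase b) + FF u (S.erase a) ((A.erase b).erase a)) := by
  rw [FF, ← Finset.sum_fiberwise_of_maps_to (g := fun σ => σ⁻¹ a) (DD_maps_to hd haSA hC) (wgt u)]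
  refine Finset.sum_congr rfl ?_
  intro b hb'
  have hab : a ≠ b := fun h => (Finset.mem_erase.mp hb').1 h.symm
  have hb : b ∈ A := (Finset.mem_erase.mp hb').2
  -- split the fiber by whether σ a = b
  rw [← Finset.sum_filter_add_sum_filter_not (((DD S A).filter (fun σ => σ⁻¹ a = b)))
    (fun σ => σ a = b) (wgt u)]
  have e1 : ∑ σ ∈ ((DD S A).filter (fun σ => σ⁻¹ a = b)).filter (fun σ => σ a = b), wgt u σ
      = u * FF u (S.erase a) ((A.erase b).erase a) := by
    rw [FF, Finset.mul_sum]
    refine Finset.sum_nbij' (fun σ => Equiv.swap a b * σ) (fun τ => Equiv.swap a b * τ)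
      ?_ ?_ ?_ ?_ ?_
    · intro σ hσ
      simp only [Finset.mem_filter] at hσ
      obtain ⟨⟨hσ, hinv⟩, hab2⟩ := hσ
      have hba : σ b = a := by rw [← hinv]; exact σ.apply_symm_apply a
      exact spliceB_mem hd haSA hb hab hσ hba hab2
    · intro τ hτ
      obtain ⟨m1, m2, m3⟩ := spliceB_inv_mem hd haSA hb hab hτ
      simp only [Finset.mem_filter]
      refine ⟨⟨m1, ?_⟩, m3⟩
      exact Equiv.Perm.inv_eq_iff_eq.mpr m2.symm
    · intro σ _; exact swap_mul_invol σ
    · intro τ _; exact swap_mul_invol τ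
    · intro σ _; rw [wgt_swap_mul hu hab σ, ← mul_assoc, hu, one_mul]
  have e2 : ∑ σ ∈ ((DD S A).filter (fun σ => σ⁻¹ a = b)).filter (fun σ => ¬ σ a = b), wgt u σ
      = u * FF u S (A.erase b) := by
    rw [FF, Finset.mul_sum]
    refine Finset.sum_nbij' (fun σ => Equiv.swap a b * σ) (fun τ => Equiv.swap a b * τ)
      ?_ ?_ ?_ ?_ ?_
    · intro σ hσ
      simp only [Finset.mem_filter] at hσ
      obtain ⟨⟨hσ, hinv⟩, hab2⟩ := hσ
      have hba : σ b = a := by rw [← hinv]; exact σ.apply_symm_apply a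
      exact spliceA_mem hd haSA hb hab hσ hba hab2
    · intro τ hτ
      obtain ⟨m1, m2, m3⟩ := spliceA_inv_mem hd haSA hb hab hτ
      simp only [Finset.mem_filter]
      refine ⟨⟨m1, ?_⟩, m3⟩
      exact Equiv.Perm.inv_eq_iff_eq.mpr m2.symm
    · intro σ _; exact swap_mul_invol σ
    · intro τ _; exact swap_mul_invol τ
    · intro σ _; rw [wgt_swap_mul hu hab σ, ← mul_assoc, hu, one_mul]
  rw [e1, e2, mul_add]
  ring


lemma DD_fix_iff {S A : Finset α} {σ : Equiv.Perm α} (hσ : σ ∈ DD S A) :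
    ∀ x, x ∈ S ∪ A ↔ σ x ∈ S ∪ A := by
  obtain ⟨h1, h2, h3⟩ := mem_DD.mp hσ
  intro x
  constructor
  · intro hx
    by_contra h
    have := h2 _ h
    exact h1 x hx (σ.injective this)
  · intro hx
    by_contra h
    rw [h2 x h] at hx
    exact h hx

lemma fix_iff_pow {P : α → Prop} {σ : Equiv.Perm α} (h : ∀ x, P x ↔ P (σ x)) (k : ℕ) :
    ∀ x, P x ↔ P ((σ ^ k) x) := by
  induction k with
  | zero => intro x; rfl
  | succ n ih =>
    intro x
    rw [pow_succ, Equiv.Perm.mul_apply]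
    exact (h x).trans (ih (σ x))

lemma permCongr_mul (e : α ≃ β) (p q : Equiv.Perm α) :
    e.permCongr (p * q) = e.permCongr p * e.permCongr q := by
  ext x
  simp [Equiv.permCongr_apply, Equiv.Perm.mul_apply]

lemma permCongr_pow (e : α ≃ β) (p : Equiv.Perm α) (k : ℕ) :
    e.permCongr (p ^ k) = (e.permCongr p) ^ k := by
  induction k with
  | zero => ext x; simp
  | succ n ih => rw [pow_succ, pow_succ, permCongr_mul, ih]

section transfer

variable {S A : Finset α} {S' A' : Finset β}

/-- transcription of a permutation along an equivalence of the active parts -/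
noncomputable def trc (e : {x : α // x ∈ S ∪ A} ≃ {x : β // x ∈ S' ∪ A'}) (σ : Equiv.Perm α) :
    Equiv.Perm β :=
  if h : ∀ x, x ∈ S ∪ A ↔ σ x ∈ S ∪ A then
    (e.permCongr (σ.subtypePerm (fun x => (h x).symm))).extendDomain
      (Equiv.subtypeEquivRight (fun x => Iff.rfl))
  else 1

variable (e : {x : α // x ∈ S ∪ A} ≃ {x : β // x ∈ S' ∪ A'}) {σ : Equiv.Perm α}

lemma trc_apply_mem (h : ∀ x, x ∈ S ∪ A ↔ σ x ∈ S ∪ A) (z : {x : α // x ∈ S ∪ A}) :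
    trc e σ ↑(e z) = ↑(e (σ.subtypePerm (fun x => (h x).symm) z)) := by
  rw [trc, dif_pos h]
  have := Equiv.Perm.extendDomain_apply_image (e.permCongr (σ.subtypePerm (fun x => (h x).symm)))
    (Equiv.subtypeEquivRight (p := fun x => x ∈ S' ∪ A') (q := fun x => x ∈ S' ∪ A')
      (fun x => Iff.rfl)) (e z)
  simp only [Equiv.subtypeEquivRight_apply] at this
  rw [this]
  congr 1
  simp [Equiv.permCongr_apply]

lemma trc_pow_apply_mem (h : ∀ x, x ∈ S ∪ A ↔ σ x ∈ S ∪ A) (k : ℕ)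
    (hpow : ∀ x, x ∈ S ∪ A ↔ (σ ^ k) x ∈ S ∪ A) (z : {x : α // x ∈ S ∪ A}) :
    ((trc e σ) ^ k) ↑(e z) = ↑(e ((σ ^ k).subtypePerm (fun x => (hpow x).symm) z)) := by
  rw [trc, dif_pos h, ← Equiv.Perm.extendDomain_pow, ← permCongr_pow,
    Equiv.Perm.subtypePerm_pow]
  have := Equiv.Perm.extendDomain_apply_image
    (e.permCongr ((σ ^ k).subtypePerm (fun x => (hpow x).symm)))
    (Equiv.subtypeEquivRight (p := fun x => x ∈ S' ∪ A') (q := fun x => x ∈ S' ∪ A')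
      (fun x => Iff.rfl)) (e z)
  simp only [Equiv.subtypeEquivRight_apply] at this
  rw [this]
  congr 1
  simp [Equiv.permCongr_apply]

lemma trc_apply_not_mem (h : ∀ x, x ∈ S ∪ A ↔ σ x ∈ S ∪ A) {y : β} (hy : y ∉ S' ∪ A') :
    trc e σ y = y := by
  rw [trc, dif_pos h]
  exact Equiv.Perm.extendDomain_apply_not_subtype _ _ hy

lemma trc_sign (h : ∀ x, x ∈ S ∪ A ↔ σ x ∈ S ∪ A)
    (hout : ∀ x, x ∉ S ∪ A → σ x = x) :
    Equiv.Perm.sign (trc e σ) = Equiv.Perm.sign σ := by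
  rw [trc, dif_pos h, Equiv.Perm.sign_extendDomain, Equiv.Perm.sign_permCongr]
  have key := Equiv.Perm.sign_subtypePerm σ (fun x => (h x).symm)
    (fun x hx => by by_contra hmem; exact hx (hout x hmem))
  convert key using 3


lemma trc_mem_DD (hE : ∀ z : {x : α // x ∈ S ∪ A}, (z : α) ∈ S ↔ ((e z : β) ∈ S'))
    (hd' : _root_.Disjoint S' A') {σ : Equiv.Perm α} (hσ : σ ∈ DD S A) : trc e σ ∈ DD S' A' := by
  obtain ⟨h1, h2, h3⟩ := mem_DD.mp hσ
  have h : ∀ x, x ∈ S ∪ A ↔ σ x ∈ S ∪ A := DD_fix_iff hσ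
  rw [mem_DD]
  refine ⟨?_, ?_, ?_⟩
  · intro y hy
    set z := e.symm ⟨y, hy⟩ with hz
    have hez : (⟨y, hy⟩ : {x : β // x ∈ S' ∪ A'}) = e z := by rw [hz, Equiv.apply_symm_apply]
    have hyz : y = ↑(e z) := by rw [← hez]
    rw [hyz, trc_apply_mem e h z]
    intro hcontra
    have : e (σ.subtypePerm (fun x => (h x).symm) z) = e z := Subtype.ext hcontra
    have : σ.subtypePerm (fun x => (h x).symm) z = z := e.injective this
    have : σ ↑z = ↑z := by
      have := congrArg Subtype.val this
      simpa using this
    exact h1 _ z.2 this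
  · intro y hy
    exact trc_apply_not_mem e h hy
  · intro x' hx' y' hy' hxy'
    set zx := e.symm ⟨x', Finset.mem_union_left _ hx'⟩ with hzx
    set zy := e.symm ⟨y', Finset.mem_union_left _ hy'⟩ with hzy
    have hex : (⟨x', _⟩ : {x : β // x ∈ S' ∪ A'}) = e zx := (Equiv.apply_symm_apply _ _).symm
    have hey : (⟨y', _⟩ : {x : β // x ∈ S' ∪ A'}) = e zy := (Equiv.apply_symm_apply _ _).symm
    have hxS : (zx : α) ∈ S := by
      rw [hE zx, ← hex]; exact hx'
    have hyS : (zy : α) ∈ S := by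
      rw [hE zy, ← hey]; exact hy'
    have hne : (zx : α) ≠ (zy : α) := by
      intro hcontra
      apply hxy'
      have hzz : zx = zy := Subtype.ext hcontra
      have : (⟨x', Finset.mem_union_left _ hx'⟩ : {x : β // x ∈ S' ∪ A'})
          = ⟨y', Finset.mem_union_left _ hy'⟩ := by rw [hex, hey, hzz]
      exact Subtype.ext_iff.mp this
    intro hcontra
    apply h3 _ hxS _ hyS hne
    rw [sameCycle_iff_nat] at hcontra ⊢
    obtain ⟨k, hk⟩ := hcontra
    refine ⟨k, ?_⟩
    have hpow : ∀ x, x ∈ S ∪ A ↔ (σ ^ k) x ∈ S ∪ A := fix_iff_pow h k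
    have hx'' : x' = ↑(e zx) := by rw [← hex]
    rw [hx''] at hk
    rw [trc_pow_apply_mem e h k hpow zx] at hk
    have heq : e ((σ ^ k).subtypePerm (fun x => (hpow x).symm) zx)
        = (⟨y', Finset.mem_union_left _ hy'⟩ : {x : β // x ∈ S' ∪ A'}) := Subtype.ext hk
    rw [hey] at heq
    have := e.injective heq
    have := congrArg Subtype.val this
    simpa using this


lemma trc_trc (hE : ∀ z : {x : α // x ∈ S ∪ A}, (z : α) ∈ S ↔ ((e z : β) ∈ S'))
    (hd' : _root_.Disjoint S' A') {σ : Equiv.Perm α} (hσ : σ ∈ DD S A) :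
    trc e.symm (trc e σ) = σ := by
  have h : ∀ x, x ∈ S ∪ A ↔ σ x ∈ S ∪ A := DD_fix_iff hσ
  have hτ : trc e σ ∈ DD S' A' := trc_mem_DD e hE hd' hσ
  have h' : ∀ y, y ∈ S' ∪ A' ↔ (trc e σ) y ∈ S' ∪ A' := DD_fix_iff hτ
  ext x
  by_cases hx : x ∈ S ∪ A
  · have hx1 : x = ↑(e.symm (e ⟨x, hx⟩)) := by rw [Equiv.symm_apply_apply]
    conv_lhs => rw [hx1]
    rw [trc_apply_mem e.symm h' (e ⟨x, hx⟩)]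
    have : (trc e σ).subtypePerm (fun y => (h' y).symm) (e ⟨x, hx⟩) = e (σ.subtypePerm (fun y => (h y).symm) ⟨x, hx⟩) := by
      apply Subtype.ext
      simp only [Equiv.Perm.subtypePerm_apply]
      exact trc_apply_mem e h ⟨x, hx⟩
    rw [this, Equiv.symm_apply_apply]
    rfl
  · rw [trc_apply_not_mem e.symm h' hx]
    obtain ⟨_, h2, _⟩ := mem_DD.mp hσ
    exact (h2 x hx).symm

noncomputable def uEq (hd : _root_.Disjoint S A) (hd' : _root_.Disjoint S' A')
    (eS : {x : α // x ∈ S} ≃ {x : β // x ∈ S'}) (eA : {x : α // x ∈ A} ≃ {x : β // x ∈ A'}) :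
    {x : α // x ∈ S ∪ A} ≃ {x : β // x ∈ S' ∪ A'} where
  toFun z := if h : (z : α) ∈ S then
      ⟨↑(eS ⟨z, h⟩), Finset.mem_union_left _ (eS ⟨z, h⟩).2⟩
    else
      ⟨↑(eA ⟨z, (Finset.mem_union.mp z.2).resolve_left h⟩),
        Finset.mem_union_right _ (eA ⟨z, (Finset.mem_union.mp z.2).resolve_left h⟩).2⟩
  invFun w := if h : (w : β) ∈ S' then
      ⟨↑(eS.symm ⟨w, h⟩), Finset.mem_union_left _ (eS.symm ⟨w, h⟩).2⟩
    else
      ⟨↑(eA.symm ⟨w, (Finset.mem_union.mp w.2).resolve_left h⟩),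
        Finset.mem_union_right _ (eA.symm ⟨w, (Finset.mem_union.mp w.2).resolve_left h⟩).2⟩
  left_inv z := by
    by_cases h : (z : α) ∈ S
    · simp only [dif_pos h]
      have hS' : ((eS ⟨z, h⟩ : {x : β // x ∈ S'}) : β) ∈ S' := (eS ⟨z, h⟩).2
      rw [dif_pos hS']
      apply Subtype.ext
      simp [Subtype.coe_eta]
    · simp only [dif_neg h]
      have hmA := (Finset.mem_union.mp z.2).resolve_left h
      have hA' : ((eA ⟨z, hmA⟩ : {x : β // x ∈ A'}) : β) ∈ A' := (eA ⟨z, hmA⟩).2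
      have hnS' : ((eA ⟨z, hmA⟩ : {x : β // x ∈ A'}) : β) ∉ S' :=
        fun hc => (Finset.disjoint_left.mp hd' hc) hA'
      rw [dif_neg hnS']
      apply Subtype.ext
      simp [Subtype.coe_eta]
  right_inv w := by
    by_cases h : (w : β) ∈ S'
    · simp only [dif_pos h]
      have hS : ((eS.symm ⟨w, h⟩ : {x : α // x ∈ S}) : α) ∈ S := (eS.symm ⟨w, h⟩).2
      rw [dif_pos hS]
      apply Subtype.ext
      simp [Subtype.coe_eta]
    · simp only [dif_neg h]
      have hmA := (Finset.mem_union.mp w.2).resolve_left h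
      have hA : ((eA.symm ⟨w, hmA⟩ : {x : α // x ∈ A}) : α) ∈ A := (eA.symm ⟨w, hmA⟩).2
      have hnS : ((eA.symm ⟨w, hmA⟩ : {x : α // x ∈ A}) : α) ∉ S :=
        fun hc => (Finset.disjoint_left.mp hd hc) hA
      rw [dif_neg hnS]
      apply Subtype.ext
      simp [Subtype.coe_eta]

lemma uEq_hE (hd : _root_.Disjoint S A) (hd' : _root_.Disjoint S' A')
    (eS : {x : α // x ∈ S} ≃ {x : β // x ∈ S'}) (eA : {x : α // x ∈ A} ≃ {x : β // x ∈ A'}) :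
    ∀ z : {x : α // x ∈ S ∪ A}, (z : α) ∈ S ↔ ((uEq hd hd' eS eA z : β) ∈ S') := by
  intro z
  by_cases h : (z : α) ∈ S
  · simp only [uEq, Equiv.coe_fn_mk, dif_pos h]
    exact ⟨fun _ => (eS ⟨z, h⟩).2, fun _ => h⟩
  · simp only [uEq, Equiv.coe_fn_mk, dif_neg h]
    constructor
    · intro hc; exact absurd hc h
    · intro hc
      exact absurd hc (fun hcc => (Finset.disjoint_left.mp hd' hcc)
        (eA ⟨z, (Finset.mem_union.mp z.2).resolve_left h⟩).2)

theorem FF_transfer (u : ℤ) (S A : Finset α) (S' A' : Finset β)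
    (hd : _root_.Disjoint S A) (hd' : _root_.Disjoint S' A')
    (hS : S.card = S'.card) (hA : A.card = A'.card) :
    FF u S A = FF u S' A' := by
  have eS : {x : α // x ∈ S} ≃ {x : β // x ∈ S'} := Finset.equivOfCardEq hS
  have eA : {x : α // x ∈ A} ≃ {x : β // x ∈ A'} := Finset.equivOfCardEq hA
  set e := uEq hd hd' eS eA with he
  have hE := uEq_hE hd hd' eS eA
  have hE' : ∀ w : {x : β // x ∈ S' ∪ A'}, (w : β) ∈ S' ↔ ((e.symm w : α) ∈ S) := by
    intro w
    have := hE (e.symm w)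
    rw [Equiv.apply_symm_apply] at this
    exact this.symm
  rw [FF, FF]
  refine Finset.sum_nbij' (trc e) (trc e.symm) ?_ ?_ ?_ ?_ ?_
  · intro σ hσ; exact trc_mem_DD e hE hd' hσ
  · intro τ hτ; exact trc_mem_DD e.symm hE' hd hτ
  · intro σ hσ; exact trc_trc e hE hd' hσ
  · intro τ hτ
    have := trc_trc e.symm hE' hd hτ
    rw [Equiv.symm_symm] at this
    exact this
  · intro σ hσ
    have hsg := trc_sign e (DD_fix_iff hσ) (mem_DD.mp hσ).2.1
    rw [wgt, wgt, hsg]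



end transfer

noncomputable def stdS (s t : ℕ) : Finset (Fin (s + t)) :=
  Finset.univ.filter (fun x => (x : ℕ) < s)
noncomputable def stdA (s t : ℕ) : Finset (Fin (s + t)) :=
  Finset.univ.filter (fun x => ¬ (x : ℕ) < s)
noncomputable def ff (u : ℤ) (s t : ℕ) : ℤ := FF u (stdS s t) (stdA s t)

lemma std_disjoint (s t : ℕ) : Disjoint (stdS s t) (stdA s t) :=
  Finset.disjoint_filter_filter_not _ _ _

lemma std_union (s t : ℕ) : stdS s t ∪ stdA s t = Finset.univ :=
  Finset.filter_union_filter_not_eq _ _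

lemma stdS_card (s t : ℕ) : (stdS s t).card = s := by
  have : stdS s t = Finset.map (Fin.castAddEmb t) Finset.univ := by
    ext x
    simp only [stdS, Finset.mem_filter, Finset.mem_univ, true_and, Finset.mem_map]
    constructor
    · intro hx
      refine ⟨⟨(x : ℕ), hx⟩, ?_⟩
      apply Fin.ext
      simp [Fin.castAddEmb]
    · rintro ⟨y, rfl⟩
      simp [Fin.castAddEmb]
  rw [this, Finset.card_map, Finset.card_univ, Fintype.card_fin]

lemma stdA_card (s t : ℕ) : (stdA s t).card = t := by
  have h := Finset.card_filter_add_card_filter_not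
    (s := (Finset.univ : Finset (Fin (s + t)))) (p := fun x => (x : ℕ) < s)
  rw [Finset.card_univ, Fintype.card_fin] at h
  have := stdS_card s t
  rw [stdS] at this
  rw [stdA]
  omega

lemma ff_base0 (u : ℤ) : ff u 0 0 = 1 := by
  have hDD : DD (stdS 0 0) (stdA 0 0) = Finset.univ := by
    ext σ
    simp only [Finset.mem_univ, iff_true, mem_DD]
    refine ⟨fun x _ => x.elim0, fun x _ => x.elim0, fun x hx => x.elim0⟩
  have huniv : (Finset.univ : Finset (Equiv.Perm (Fin 0))) = {1} := by
    apply Finset.eq_singleton_iff_unique_mem.mpr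
    exact ⟨Finset.mem_univ _, fun σ _ => Subsingleton.elim σ 1⟩
  rw [ff, FF, hDD, huniv, Finset.sum_singleton, wgt, if_pos (by simp)]

lemma ff_base1 (u : ℤ) : ff u 0 1 = 0 := by
  have hDD : DD (stdS 0 1) (stdA 0 1) = ∅ := by
    ext σ
    simp only [Finset.notMem_empty, iff_false, mem_DD]
    rintro ⟨h1, -, -⟩
    have h0 : (0 : Fin 1) ∈ stdS 0 1 ∪ stdA 0 1 := by rw [std_union]; exact Finset.mem_univ _
    refine h1 0 h0 (Fin.ext ?_)
    omega
  rw [ff, FF, hDD, Finset.sum_empty]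

lemma ff_base_s (u : ℤ) (s : ℕ) (hs : 1 ≤ s) : ff u s 0 = 0 := by
  have hDD : DD (stdS s 0) (stdA s 0) = ∅ := by
    ext σ
    simp only [Finset.notMem_empty, iff_false, mem_DD]
    rintro ⟨h1, -, h3⟩
    have ha : (⟨0, by omega⟩ : Fin (s + 0)) ∈ stdS s 0 := by
      simp only [stdS, Finset.mem_filter, Finset.mem_univ, true_and]
      exact hs
    have haU : (⟨0, by omega⟩ : Fin (s + 0)) ∈ stdS s 0 ∪ stdA s 0 := by
      rw [std_union]; exact Finset.mem_univ _
    set a : Fin (s + 0) := ⟨0, by omega⟩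
    have hmove : σ a ≠ a := h1 a haU
    have hxS : σ a ∈ stdS s 0 := by
      simp only [stdS, Finset.mem_filter, Finset.mem_univ, true_and]
      omega
    exact h3 a ha (σ a) hxS (Ne.symm hmove) ⟨1, by simp⟩
  rw [ff, FF, hDD, Finset.sum_empty]

lemma ff_succ {u : ℤ} (hu : u * u = 1) (s t : ℕ) :
    ff u (s + 1) (t + 1) = ((t + 1 : ℕ) : ℤ) * (u * (ff u (s + 1) t + ff u s t)) := by
  set S := stdS (s + 1) (t + 1)
  set A := stdA (s + 1) (t + 1)
  have ha : (⟨0, by omega⟩ : Fin (s + 1 + (t + 1))) ∈ S := by simp [S, stdS]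
  set a : Fin (s + 1 + (t + 1)) := ⟨0, by omega⟩
  have haU : a ∈ S ∪ A := Finset.mem_union_left _ ha
  have hC : ∀ σ ∈ DD S A, ∀ x ∈ S, σ x = a → x = a := by
    intro σ hσ x hx hxa
    by_contra hne
    exact (mem_DD.mp hσ).2.2 x hx a ha hne ⟨1, by simpa using hxa⟩
  have haA : a ∉ A := fun h => (Finset.disjoint_left.mp (std_disjoint _ _) ha) h
  rw [ff, FF_rec hu S A (std_disjoint _ _) a haU hC, Finset.erase_eq_of_notMem haA]
  have hterm : ∀ b ∈ A, u * (FF u S (A.erase b) + FF u (S.erase a) ((A.erase b).erase a))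
      = u * (ff u (s + 1) t + ff u s t) := by
    intro b hb
    have hbS : b ∉ S := fun h => (Finset.disjoint_left.mp (std_disjoint _ _) h) hb
    have habA : a ∉ A.erase b := fun h => haA (Finset.mem_of_mem_erase h)
    have h1 : FF u S (A.erase b) = ff u (s + 1) t := by
      rw [ff]
      apply FF_transfer
      · exact Finset.disjoint_of_subset_right (Finset.erase_subset _ _) (std_disjoint _ _)
      · exact std_disjoint _ _
      · rw [stdS_card, stdS_card]
      · rw [Finset.card_erase_of_mem hb, stdA_card, stdA_card]
        omega
    have h2 : FF u (S.erase a) ((A.erase b).erase a) = ff u s t := by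
      rw [Finset.erase_eq_of_notMem habA, ff]
      apply FF_transfer
      · exact Finset.disjoint_of_subset_right (Finset.erase_subset _ _)
          (Finset.disjoint_of_subset_left (Finset.erase_subset _ _) (std_disjoint _ _))
      · exact std_disjoint _ _
      · rw [Finset.card_erase_of_mem ha, stdS_card, stdS_card]
        omega
      · rw [Finset.card_erase_of_mem hb, stdA_card, stdA_card]
        omega
    rw [h1, h2]
  rw [Finset.sum_congr rfl hterm, Finset.sum_const, stdA_card, nsmul_eq_mul]

lemma ff_zrec {u : ℤ} (hu : u * u = 1) (t : ℕ) :
    ff u 0 (t + 2) = ((t + 1 : ℕ) : ℤ) * (u * (ff u 0 (t + 1) + ff u 0 t)) := by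
  set S := stdS 0 (t + 2)
  set A := stdA 0 (t + 2)
  have hSempty : S = ∅ := by
    apply Finset.eq_empty_iff_forall_notMem.mpr
    intro x hx
    simp [S, stdS] at hx
  have ha : (⟨0, by omega⟩ : Fin (0 + (t + 2))) ∈ A := by simp [A, stdA]
  set a : Fin (0 + (t + 2)) := ⟨0, by omega⟩
  have haU : a ∈ S ∪ A := Finset.mem_union_right _ ha
  have hC : ∀ σ ∈ DD S A, ∀ x ∈ S, σ x = a → x = a := by
    intro σ hσ x hx
    rw [hSempty] at hx
    exact absurd hx (Finset.notMem_empty x)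
  rw [ff, FF_rec hu S A (std_disjoint _ _) a haU hC]
  have hterm : ∀ b ∈ A.erase a,
      u * (FF u S (A.erase b) + FF u (S.erase a) ((A.erase b).erase a))
      = u * (ff u 0 (t + 1) + ff u 0 t) := by
    intro b hb'
    have hb : b ∈ A := Finset.mem_of_mem_erase hb'
    have hba : b ≠ a := (Finset.mem_erase.mp hb').1
    have h1 : FF u S (A.erase b) = ff u 0 (t + 1) := by
      rw [ff]
      apply FF_transfer
      · exact Finset.disjoint_of_subset_right (Finset.erase_subset _ _) (std_disjoint _ _)
      · exact std_disjoint _ _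
      · simp [hSempty, stdS_card]
      · rw [Finset.card_erase_of_mem hb, stdA_card, stdA_card]
        omega
    have h2 : FF u (S.erase a) ((A.erase b).erase a) = ff u 0 t := by
      rw [ff]
      apply FF_transfer
      · rw [hSempty]
        simp
      · exact std_disjoint _ _
      · simp [hSempty, stdS_card]
      · rw [Finset.card_erase_of_mem (Finset.mem_erase.mpr ⟨fun h => hba h.symm, ha⟩),
          Finset.card_erase_of_mem hb, stdA_card, stdA_card]
        omega
    rw [h1, h2]
  rw [Finset.sum_congr rfl hterm, Finset.sum_const,
    Finset.card_erase_of_mem ha, stdA_card, nsmul_eq_mul]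
  norm_num


lemma F0_id (n : ℕ) : ff 1 0 (n + 1) = ((n + 1 : ℕ) : ℤ) * ff 1 0 n + (-1) ^ (n + 1) := by
  induction n with
  | zero => rw [ff_base1, ff_base0]; norm_num
  | succ n ih =>
    rw [ff_zrec (by norm_num) n]
    push_cast
    push_cast at ih
    linear_combination -ih

lemma H0_id (n : ℕ) : ff (-1) 0 n = (-1) ^ n * (1 - (n : ℤ)) := by
  induction n using Nat.strong_induction_on with
  | _ n ih =>
    match n with
    | 0 => rw [ff_base0]; norm_num
    | 1 => rw [ff_base1]; norm_num
    | (m + 2) =>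
      rw [ff_zrec (by norm_num) m, ih (m+1) (by omega), ih m (by omega)]
      push_cast
      ring

noncomputable def Gs (s : ℕ) : PowerSeries ℚ :=
  PowerSeries.mk fun n => ((ff 1 s n : ℤ) : ℚ) / (Nat.factorial n : ℚ)
noncomputable def Hs (s : ℕ) : PowerSeries ℚ :=
  PowerSeries.mk fun n => ((ff (-1) s n : ℤ) : ℚ) / (Nat.factorial n : ℚ)
noncomputable def EE : PowerSeries ℚ := rescale (-1 : ℚ) (exp ℚ)

lemma coeff_EE (n : ℕ) : (PowerSeries.coeff n) EE = (-1) ^ n / (Nat.factorial n : ℚ) := by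
  rw [EE, coeff_rescale, coeff_exp]
  simp [algebraMap]
  ring

lemma fact_ne (n : ℕ) : (Nat.factorial n : ℚ) ≠ 0 := by
  exact_mod_cast Nat.factorial_ne_zero n

lemma Gs_step (s : ℕ) : Gs (s + 1) = X * Gs s + X * Gs (s + 1) := by
  ext n
  rcases n with _ | n
  · simp only [Gs, coeff_mk, map_add, PowerSeries.coeff_zero_X_mul, add_zero]
    rw [ff_base_s 1 (s+1) (by omega)]
    simp
  · simp only [Gs, map_add, coeff_succ_X_mul, coeff_mk]
    rw [ff_succ (by norm_num) s n]
    have h1 : (Nat.factorial (n+1) : ℚ) = (n+1) * Nat.factorial n := by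
      exact_mod_cast Nat.factorial_succ n
    push_cast
    rw [h1]
    field_simp
    ring

lemma Hs_step (s : ℕ) : Hs (s + 1) = -(X * Hs s) - X * Hs (s + 1) := by
  ext n
  rcases n with _ | n
  · simp only [Hs, coeff_mk, map_sub, map_neg, PowerSeries.coeff_zero_X_mul]
    rw [ff_base_s (-1) (s+1) (by omega)]
    simp
  · simp only [Hs, map_sub, map_neg, coeff_succ_X_mul, coeff_mk]
    rw [ff_succ (by norm_num) s n]
    have h1 : (Nat.factorial (n+1) : ℚ) = (n+1) * Nat.factorial n := by
      exact_mod_cast Nat.factorial_succ n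
    push_cast
    rw [h1]
    field_simp
    ring

lemma Gs_base : Gs 0 = EE + X * Gs 0 := by
  ext n
  rcases n with _ | n
  · simp only [Gs, coeff_mk, map_add, PowerSeries.coeff_zero_X_mul, add_zero, coeff_EE]
    rw [ff_base0]
    simp
  · simp only [Gs, map_add, coeff_succ_X_mul, coeff_mk, coeff_EE]
    rw [F0_id n]
    have h1 : (Nat.factorial (n+1) : ℚ) = (n+1) * Nat.factorial n := by
      exact_mod_cast Nat.factorial_succ n
    push_cast
    rw [h1]
    field_simp
    ring

lemma Hs_base : Hs 0 = EE + X * EE := by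
  ext n
  rcases n with _ | n
  · simp only [Hs, coeff_mk, map_add, PowerSeries.coeff_zero_X_mul, add_zero, coeff_EE]
    rw [ff_base0]
    simp
  · simp only [Hs, map_add, coeff_succ_X_mul, coeff_mk, coeff_EE]
    rw [H0_id (n+1)]
    have h1 : (Nat.factorial (n+1) : ℚ) = (n+1) * Nat.factorial n := by
      exact_mod_cast Nat.factorial_succ n
    push_cast
    rw [h1]
    field_simp
    ring

lemma Gs_mul_eq (s : ℕ) : Gs s * (1 - X) ^ (s + 1) = X ^ s * EE := by
  induction s with
  | zero =>
    rw [pow_one, pow_zero, one_mul]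
    linear_combination Gs_base
  | succ s ih =>
    have hstep : Gs (s + 1) * (1 - X) = X * Gs s := by
      linear_combination Gs_step s
    calc Gs (s + 1) * (1 - X) ^ (s + 1 + 1)
        = (Gs (s + 1) * (1 - X)) * (1 - X) ^ (s + 1) := by ring
      _ = X * (Gs s * (1 - X) ^ (s + 1)) := by rw [hstep]; ring
      _ = X ^ (s + 1) * EE := by rw [ih]; ring

lemma Hs_mul_eq (s : ℕ) : Hs s * (1 + X) ^ s = (-1) ^ s * (X ^ s * ((1 + X) * EE)) := by
  induction s with
  | zero =>
    simp only [pow_zero, mul_one, one_mul]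
    linear_combination Hs_base
  | succ s ih =>
    have hstep : Hs (s + 1) * (1 + X) = -(X * Hs s) := by
      linear_combination Hs_step s
    calc Hs (s + 1) * (1 + X) ^ (s + 1)
        = (Hs (s + 1) * (1 + X)) * (1 + X) ^ s := by ring
      _ = -(X * (Hs s * (1 + X) ^ s)) := by rw [hstep]; ring
      _ = (-1) ^ (s + 1) * (X ^ (s + 1) * ((1 + X) * EE)) := by rw [ih]; ring


lemma rDer_eq_DD (r n : ℕ) : rDerSet r n = DD (stdS r n) (stdA r n) := by
  ext σ
  rw [mem_DD, rDerSet, Finset.mem_filter]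
  constructor
  · rintro ⟨-, h1, h2⟩
    refine ⟨fun x _ => h1 x, fun x hx => absurd (Finset.mem_univ x) (by rw [← std_union r n]; exact hx), ?_⟩
    intro x hx y hy hxy
    rw [stdS, Finset.mem_filter] at hx hy
    exact h2 x y hx.2 hy.2 hxy
  · rintro ⟨h1, h2, h3⟩
    refine ⟨Finset.mem_univ _, fun x => h1 x (by rw [std_union r n]; exact Finset.mem_univ x), ?_⟩
    intro x y hx hy hxy
    exact h3 x (by rw [stdS, Finset.mem_filter]; exact ⟨Finset.mem_univ _, hx⟩)
      y (by rw [stdS, Finset.mem_filter]; exact ⟨Finset.mem_univ _, hy⟩) hxy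

lemma parity_zero_iff {σ : Equiv.Perm α} : parity σ = 0 ↔ Equiv.Perm.sign σ = 1 := by
  rw [parity]
  by_cases h : Equiv.Perm.sign σ = 1 <;> simp [h]

lemma parity_one_iff {σ : Equiv.Perm α} : parity σ = 1 ↔ ¬ (parity σ = 0) := by
  rw [parity]
  by_cases h : Equiv.Perm.sign σ = 1 <;> simp [h]

lemma Dri_sum (r n : ℕ) : (Dri r 0 n : ℤ) + (Dri r 1 n : ℤ) = ff 1 r n := by
  have h1 : ff 1 r n = ((rDerSet r n).card : ℤ) := by
    rw [ff, FF, ← rDer_eq_DD]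
    rw [Finset.sum_congr rfl (fun σ _ => show wgt 1 σ = 1 by rw [wgt]; split <;> rfl)]
    simp
  rw [h1, Dri, Dri]
  have h2 : (rDerSet r n).filter (fun σ => parity σ = 1)
      = (rDerSet r n).filter (fun σ => ¬ parity σ = 0) := by
    apply Finset.filter_congr
    intro σ _
    exact parity_one_iff
  rw [h2]
  have := Finset.card_filter_add_card_filter_not
    (s := rDerSet r n) (p := fun σ => parity σ = 0)
  exact_mod_cast this

lemma Dri_diff (r n : ℕ) : (Dri r 0 n : ℤ) - (Dri r 1 n : ℤ) = ff (-1) r n := by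
  rw [ff, FF, ← rDer_eq_DD]
  rw [← Finset.sum_filter_add_sum_filter_not (rDerSet r n) (fun σ => parity σ = 0) (wgt (-1))]
  have e1 : ∑ σ ∈ (rDerSet r n).filter (fun σ => parity σ = 0), wgt (-1) σ
      = (Dri r 0 n : ℤ) := by
    rw [Finset.sum_congr rfl (fun σ hσ => show wgt (-1) σ = 1 by
      rw [wgt, if_pos (parity_zero_iff.mp (Finset.mem_filter.mp hσ).2)])]
    rw [Finset.sum_const, nsmul_eq_mul, mul_one, Dri]
  have e2 : ∑ σ ∈ (rDerSet r n).filter (fun σ => ¬ parity σ = 0), wgt (-1) σ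
      = -(Dri r 1 n : ℤ) := by
    rw [Finset.sum_congr rfl (fun σ hσ => show wgt (-1) σ = -1 by
      rw [wgt, if_neg (by
        intro hc
        exact (Finset.mem_filter.mp hσ).2 (parity_zero_iff.mpr hc))])]
    have h2 : (rDerSet r n).filter (fun σ => ¬ parity σ = 0)
        = (rDerSet r n).filter (fun σ => parity σ = 1) := by
      apply Finset.filter_congr
      intro σ _
      exact parity_one_iff.symm
    rw [h2]
    rw [Finset.sum_const, nsmul_eq_mul, Dri]
    ring
  rw [e1, e2]
  ring


end RDerangementEGF

open PowerSeries in
/-- The exponential generating function of `D_r^{(i)}(n)` equals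
`(1/2) (x^r e^{-x}/(1-x)^{r+1} + (-1)^{r+i} x^r e^{-x}/(1+x)^{r-1})`, stated
multiplicatively (both sides multiplied by `2 (1-x)^{r+1} (1+x)^r`, so that only
non-negative exponents occur, also valid for `r = 0`). -/
theorem Dri_egf (r i : ℕ) (hi : i ≤ 1) :
    2 * (PowerSeries.mk fun n => (Dri r i n : ℚ) / (Nat.factorial n : ℚ)) *
        (1 - X) ^ (r + 1) * (1 + X) ^ r =
      X ^ r * rescale (-1 : ℚ) (exp ℚ) * (1 + X) ^ r +
        (-1) ^ (r + i) * X ^ r * rescale (-1 : ℚ) (exp ℚ) * (1 - X) ^ (r + 1) * (1 + X) := by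
  have hEE : rescale (-1 : ℚ) (exp ℚ) = EE := rfl
  have hadd : (PowerSeries.mk fun n => (Dri r 0 n : ℚ) / (Nat.factorial n : ℚ))
      + (PowerSeries.mk fun n => (Dri r 1 n : ℚ) / (Nat.factorial n : ℚ)) = Gs r := by
    ext n
    simp only [map_add, coeff_mk, Gs]
    rw [← add_div]
    congr 1
    exact_mod_cast Dri_sum r n
  have hsub : (PowerSeries.mk fun n => (Dri r 0 n : ℚ) / (Nat.factorial n : ℚ))
      - (PowerSeries.mk fun n => (Dri r 1 n : ℚ) / (Nat.factorial n : ℚ)) = Hs r := by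
    ext n
    simp only [map_sub, coeff_mk, Hs]
    rw [div_sub_div_same]
    congr 1
    exact_mod_cast Dri_diff r n
  rw [hEE]
  interval_cases i
  · have h2 : 2 * (PowerSeries.mk fun n => (Dri r 0 n : ℚ) / (Nat.factorial n : ℚ))
        = Gs r + Hs r := by
      linear_combination hadd + hsub
    linear_combination ((1 - X) ^ (r + 1) * (1 + X) ^ r) * h2
      + (1 + X) ^ r * (Gs_mul_eq r) + (1 - X) ^ (r + 1) * (Hs_mul_eq r)
  · have h2 : 2 * (PowerSeries.mk fun n => (Dri r 1 n : ℚ) / (Nat.factorial n : ℚ))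
        = Gs r - Hs r := by
      linear_combination hadd - hsub
    linear_combination ((1 - X) ^ (r + 1) * (1 + X) ^ r) * h2
      + (1 + X) ^ r * (Gs_mul_eq r) - (1 - X) ^ (r + 1) * (Hs_mul_eq r)
end

section
/- For all natural numbers r ≥ 1 and n: D_r(n) = r·D_{r−1}(n−1) + (n−1)·D_r(n−2) + (n+r−1)·D_r(n−1) for n ≥ 2, where D_r(n) is the number of r-derangements, with D_r(n)=0 for n<r and D_r(r)=r!. -/
open scoped Classical
open Equiv



open scoped Classical

namespace DRwork

variable {α β : Type*}

lemma permCongr_zpow (e : α ≃ β) (σ : Equiv.Perm α) (i : ℤ) :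
    (e.permCongr σ) ^ i = e.permCongr (σ ^ i) := by
  let φ : Equiv.Perm α ≃* Equiv.Perm β :=
    { e.permCongr with
      map_mul' := by
        intro a b
        ext x
        simp [Equiv.permCongr_apply, Equiv.Perm.mul_apply] }
  exact (map_zpow φ σ i).symm

lemma sameCycle_permCongr (e : α ≃ β) (σ : Equiv.Perm α) {x y : α} :
    (e.permCongr σ).SameCycle (e x) (e y) ↔ σ.SameCycle x y := by
  constructor
  · rintro ⟨i, hi⟩
    refine ⟨i, ?_⟩
    rw [permCongr_zpow] at hi
    simpa using hi
  · rintro ⟨i, hi⟩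
    refine ⟨i, ?_⟩
    rw [permCongr_zpow]
    simp [hi]

lemma sameCycle_removeNone [Fintype α] [DecidableEq α] (σ : Equiv.Perm (Option α)) {a b : α} :
    Equiv.Perm.SameCycle (Equiv.removeNone σ) a b ↔ σ.SameCycle (some a) (some b) := by
  set τ : Equiv.Perm α := Equiv.removeNone σ with hτ
  have step : ∀ c : α, σ.SameCycle (some c) (some (τ c)) := by
    intro c
    rcases h : σ (some c) with _ | d
    · have h2 : some (τ c) = σ none := Equiv.removeNone_none σ h
      refine ⟨2, ?_⟩
      have : (σ ^ (2:ℤ)) (some c) = σ (σ (some c)) := by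
        rw [show (2:ℤ) = 1 + 1 by norm_num, zpow_add, zpow_one]
        simp [Equiv.Perm.mul_apply]
      rw [this, h, ← h2]
    · have h2 : some (τ c) = σ (some c) := Equiv.removeNone_some σ ⟨d, h⟩
      exact ⟨1, by simpa using h2.symm⟩
  constructor
  · intro h
    obtain ⟨k, -, hk⟩ := Equiv.Perm.SameCycle.exists_pow_eq' h
    clear h
    induction k generalizing a with
    | zero => simp at hk; exact hk ▸ Equiv.Perm.SameCycle.refl _ _
    | succ k ih =>
      have hk' : (τ ^ k) (τ a) = b := by
        rw [← hk, pow_succ]; simp [Equiv.Perm.mul_apply]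
      exact (step a).trans (ih hk')
  · intro h
    obtain ⟨k, -, hk⟩ := Equiv.Perm.SameCycle.exists_pow_eq' h
    clear h
    induction k using Nat.strong_induction_on generalizing a with
    | _ k ih =>
      match k, hk with
      | 0, hk => simp at hk; exact hk ▸ Equiv.Perm.SameCycle.refl _ _
      | 1, hk =>
        simp only [pow_one] at hk
        rcases h : σ (some a) with _ | d
        · rw [h] at hk; exact absurd hk (by simp)
        · have h2 : some (τ a) = σ (some a) := Equiv.removeNone_some σ ⟨d, h⟩
          have : τ a = b := by rw [hk] at h2; exact Option.some_injective _ h2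
          exact ⟨1, by simpa using this⟩
      | (k+2), hk =>
        rcases h : σ (some a) with _ | d
        · -- σ (some a) = none, so σ² (some a) = σ none = some (τ a)
          have h2 : some (τ a) = σ none := Equiv.removeNone_none σ h
          have hk' : (σ ^ k) (some (τ a)) = some b := by
            have : (σ ^ (k+2)) (some a) = (σ ^ k) (σ (σ (some a))) := by
              rw [pow_add]; simp [Equiv.Perm.mul_apply, pow_two, Equiv.Perm.mul_apply]
            rw [this, h, ← h2] at hk
            exact hk
          exact Equiv.Perm.SameCycle.trans ⟨1, rfl⟩ (ih k (by omega) hk')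
        · have h2 : some (τ a) = σ (some a) := Equiv.removeNone_some σ ⟨d, h⟩
          have hk' : (σ ^ (k+1)) (some (τ a)) = some b := by
            have : (σ ^ (k+2)) (some a) = (σ ^ (k+1)) (σ (some a)) := by
              rw [pow_succ]; simp [Equiv.Perm.mul_apply]
            rw [this, ← h2] at hk
            exact hk
          exact Equiv.Perm.SameCycle.trans ⟨1, rfl⟩ (ih (k+1) (by omega) hk')

end DRwork


namespace DRwork2

/-- deletion of the point `p` from a permutation of `Fin (m+1)` -/
noncomputable def delE {m : ℕ} (p : Fin (m + 1)) :
    Equiv.Perm (Fin (m + 1)) ≃ Option (Fin m) × Equiv.Perm (Fin m) :=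
  ((finSuccEquiv' p).permCongr).trans Equiv.Perm.decomposeOption

variable {m : ℕ} (p : Fin (m + 1)) (σ : Equiv.Perm (Fin (m + 1)))

lemma delE_fst : (delE p σ).1 = finSuccEquiv' p (σ p) := by
  simp [delE, Equiv.Perm.decomposeOption, finSuccEquiv'_symm_none]

lemma fse_eq_none_iff {z : Fin (m+1)} : finSuccEquiv' p z = none ↔ z = p := by
  constructor
  · intro h
    have := congrArg (finSuccEquiv' p).symm h
    simpa [finSuccEquiv'_symm_none] using this
  · rintro rfl; exact finSuccEquiv'_at _

lemma delE_snd_of_ne (j : Fin m) (h : σ (p.succAbove j) ≠ p) :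
    p.succAbove ((delE p σ).2 j) = σ (p.succAbove j) := by
  have h1 : ((finSuccEquiv' p).permCongr σ) (some j) = finSuccEquiv' p (σ (p.succAbove j)) := by
    simp [Equiv.permCongr_apply, finSuccEquiv'_symm_some]
  have h2 : ∃ x', ((finSuccEquiv' p).permCongr σ) (some j) = some x' := by
    rw [h1]
    rcases hz : finSuccEquiv' p (σ (p.succAbove j)) with _ | d
    · exact absurd ((fse_eq_none_iff p).mp hz) h
    · exact ⟨d, rfl⟩
  have h3 := Equiv.removeNone_some _ h2
  have h4 : (delE p σ).2 = Equiv.removeNone ((finSuccEquiv' p).permCongr σ) := rfl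
  rw [h4]
  have := h3.trans h1
  have := congrArg (finSuccEquiv' p).symm this
  simpa [finSuccEquiv'_symm_some] using this

lemma delE_snd_of_eq (j : Fin m) (h : σ (p.succAbove j) = p) :
    p.succAbove ((delE p σ).2 j) = σ p := by
  have h1 : ((finSuccEquiv' p).permCongr σ) (some j) = none := by
    simp [Equiv.permCongr_apply, finSuccEquiv'_symm_some, h, finSuccEquiv'_at]
  have h3 := Equiv.removeNone_none _ h1
  have h4 : (delE p σ).2 = Equiv.removeNone ((finSuccEquiv' p).permCongr σ) := rfl
  have h5 : ((finSuccEquiv' p).permCongr σ) none = finSuccEquiv' p (σ p) := by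
    simp [Equiv.permCongr_apply, finSuccEquiv'_symm_none]
  rw [h4]
  have := h3.trans h5
  have := congrArg (finSuccEquiv' p).symm this
  simpa [finSuccEquiv'_symm_some] using this

lemma delE_sameCycle (i j : Fin m) :
    ((delE p σ).2).SameCycle i j ↔ σ.SameCycle (p.succAbove i) (p.succAbove j) := by
  have h4 : (delE p σ).2 = Equiv.removeNone ((finSuccEquiv' p).permCongr σ) := rfl
  rw [h4, DRwork.sameCycle_removeNone]
  have hi : (some i : Option (Fin m)) = finSuccEquiv' p (p.succAbove i) :=
    (finSuccEquiv'_succAbove p i).symm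
  have hj : (some j : Option (Fin m)) = finSuccEquiv' p (p.succAbove j) :=
    (finSuccEquiv'_succAbove p j).symm
  rw [hi, hj, DRwork.sameCycle_permCongr]

end DRwork2

namespace DRwork3
open DRwork2

noncomputable def gSet (r M : ℕ) : Finset (Equiv.Perm (Fin M)) :=
  Finset.univ.filter (fun σ =>
    (∀ x, σ x ≠ x) ∧
    (∀ x y : Fin M, (x : ℕ) < r → (y : ℕ) < r → x ≠ y → ¬ σ.SameCycle x y))

lemma mem_gSet {r M : ℕ} {σ : Equiv.Perm (Fin M)} :
    σ ∈ gSet r M ↔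
      (∀ x, σ x ≠ x) ∧
      (∀ x y : Fin M, (x : ℕ) < r → (y : ℕ) < r → x ≠ y → ¬ σ.SameCycle x y) := by
  simp [gSet]

section CharC

variable {r m : ℕ}

lemma charC (hrm : r ≤ m) (σ : Equiv.Perm (Fin (m + 1))) :
    (σ ∈ gSet r (m + 1) ∧ σ (σ (Fin.last m)) ≠ Fin.last m) ↔
      ((delE (Fin.last m) σ).1 ≠ none ∧ (delE (Fin.last m) σ).2 ∈ gSet r m) := by
  have hsa : ∀ j : Fin m, (Fin.last m).succAbove j = Fin.castSucc j := by
    intro j; rw [Fin.succAbove_last]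
  constructor
  · rintro ⟨hσ, hC⟩
    rw [mem_gSet] at hσ
    obtain ⟨hfpf, hnc⟩ := hσ
    refine ⟨?_, mem_gSet.mpr ⟨?_, ?_⟩⟩
    · rw [delE_fst, Ne, fse_eq_none_iff]
      exact hfpf _
    · intro j hj
      by_cases h : σ (Fin.castSucc j) = Fin.last m
      · have := delE_snd_of_eq (Fin.last m) σ j (by rwa [hsa])
        simp only [hsa] at this
        rw [hj] at this
        exact hC (by rw [← this]; exact h)
      · have := delE_snd_of_ne (Fin.last m) σ j (by rwa [hsa])
        simp only [hsa] at this
        rw [hj] at this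
        exact hfpf _ this.symm
    · intro i j hi hj hne hsc
      rw [delE_sameCycle, hsa, hsa] at hsc
      exact hnc _ _ (by simpa using hi) (by simpa using hj)
        (fun h => hne (Fin.castSucc_injective m h)) hsc
  · rintro ⟨hx, hτ⟩
    rw [mem_gSet] at hτ
    obtain ⟨hfpf, hnc⟩ := hτ
    have hσL : σ (Fin.last m) ≠ Fin.last m := by
      rw [delE_fst, Ne, fse_eq_none_iff] at hx
      exact hx
    have hfix : ∀ j : Fin m, σ (Fin.castSucc j) ≠ Fin.castSucc j := by
      intro j hj
      have hne : σ (Fin.castSucc j) ≠ Fin.last m := by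
        rw [hj]; exact (Fin.castSucc_lt_last j).ne
      have := delE_snd_of_ne (Fin.last m) σ j (by rwa [hsa])
      simp only [hsa] at this
      rw [hj] at this
      exact hfpf j (Fin.castSucc_injective m this)
    refine ⟨mem_gSet.mpr ⟨?_, ?_⟩, ?_⟩
    · intro z
      by_cases hz : z = Fin.last m
      · rw [hz]; exact hσL
      · obtain ⟨j, rfl⟩ := Fin.exists_castSucc_eq.mpr hz
        exact hfix j
    · intro a b ha hb hne hsc
      have haL : a ≠ Fin.last m := by
        intro h; rw [h] at ha; simp [Fin.val_last] at ha; omega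
      have hbL : b ≠ Fin.last m := by
        intro h; rw [h] at hb; simp [Fin.val_last] at hb; omega
      obtain ⟨i, rfl⟩ := Fin.exists_castSucc_eq.mpr haL
      obtain ⟨j, rfl⟩ := Fin.exists_castSucc_eq.mpr hbL
      have : ((delE (Fin.last m) σ).2).SameCycle i j := by
        rw [delE_sameCycle, hsa, hsa]; exact hsc
      exact hnc i j (by simpa using ha) (by simpa using hb)
        (fun h => hne (by rw [h])) this
    · -- σ (σ last) ≠ last
      rcases hc : (delE (Fin.last m) σ).1 with _ | c
      · exact absurd hc hx
      · have hσL2 : σ (Fin.last m) = Fin.castSucc c := by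
          rw [delE_fst] at hc
          have := congrArg (finSuccEquiv' (Fin.last m)).symm hc
          simpa [finSuccEquiv'_symm_some, hsa] using this
        intro hC
        rw [hσL2] at hC
        have := delE_snd_of_eq (Fin.last m) σ c (by rwa [hsa])
        simp only [hsa] at this
        rw [hσL2] at this
        exact hfpf c (Fin.castSucc_injective m this)

end CharC
end DRwork3

namespace DRwork4
open DRwork2 DRwork3

variable {r m : ℕ}

lemma char2 (hrm : r ≤ m) (c : Fin m) (σ : Equiv.Perm (Fin (m + 1))) :
    (σ ∈ gSet r (m + 1) ∧ σ (Fin.last m) = Fin.castSucc c ∧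
        σ (Fin.castSucc c) = Fin.last m) ↔
      ((delE (Fin.last m) σ).1 = some c ∧
        ((delE (Fin.last m) σ).2 c = c ∧
          (∀ j, j ≠ c → (delE (Fin.last m) σ).2 j ≠ j) ∧
          (∀ i j : Fin m, (i : ℕ) < r → (j : ℕ) < r → i ≠ j →
            ¬ ((delE (Fin.last m) σ).2).SameCycle i j))) := by
  have hsa : ∀ j : Fin m, (Fin.last m).succAbove j = Fin.castSucc j := by
    intro j; rw [Fin.succAbove_last]
  constructor
  · rintro ⟨hσ, h1, h2⟩
    rw [mem_gSet] at hσ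
    obtain ⟨hfpf, hnc⟩ := hσ
    refine ⟨?_, ?_, ?_, ?_⟩
    · rw [delE_fst, h1]
      simpa [hsa] using finSuccEquiv'_succAbove (Fin.last m) c
    · have := delE_snd_of_eq (Fin.last m) σ c (by rwa [hsa])
      simp only [hsa] at this
      rw [h1] at this
      exact Fin.castSucc_injective m this
    · intro j hj hjj
      have hne : σ (Fin.castSucc j) ≠ Fin.last m := by
        intro h
        exact hj (Fin.castSucc_injective m (σ.injective (h.trans h2.symm)))
      have := delE_snd_of_ne (Fin.last m) σ j (by rwa [hsa])
      simp only [hsa] at this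
      rw [hjj] at this
      exact hfpf _ this.symm
    · intro i j hi hj hne hsc
      rw [delE_sameCycle] at hsc
      simp only [hsa] at hsc
      exact hnc _ _ (by simpa using hi) (by simpa using hj)
        (fun h => hne (Fin.castSucc_injective m h)) hsc
  · rintro ⟨hx, hc, hfpf, hnc⟩
    have hσL : σ (Fin.last m) = Fin.castSucc c := by
      rw [delE_fst] at hx
      have := congrArg (finSuccEquiv' (Fin.last m)).symm hx
      simpa [finSuccEquiv'_symm_some, hsa] using this
    have hσc : σ (Fin.castSucc c) = Fin.last m := by
      by_contra h
      have := delE_snd_of_ne (Fin.last m) σ c (by rwa [hsa])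
      simp only [hsa] at this
      rw [hc] at this
      -- this : castSucc c = σ (castSucc c), so σ fixes castSucc c; combined with hσL, injectivity
      have : σ (Fin.castSucc c) = σ (Fin.last m) := by rw [← this, hσL]
      have := σ.injective this
      exact (Fin.castSucc_lt_last c).ne this
    refine ⟨mem_gSet.mpr ⟨?_, ?_⟩, hσL, hσc⟩
    · intro z
      by_cases hz : z = Fin.last m
      · rw [hz, hσL]
        exact (Fin.castSucc_lt_last c).ne
      · obtain ⟨j, rfl⟩ := Fin.exists_castSucc_eq.mpr hz
        by_cases hjc : j = c
        · rw [hjc, hσc]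
          exact ((Fin.castSucc_lt_last c).ne).symm
        · intro hfix
          have hne : σ (Fin.castSucc j) ≠ Fin.last m := by
            rw [hfix]
            exact (Fin.castSucc_lt_last j).ne
          have := delE_snd_of_ne (Fin.last m) σ j (by rwa [hsa])
          simp only [hsa] at this
          rw [hfix] at this
          exact hfpf j hjc (Fin.castSucc_injective m this)
    · intro a b ha hb hne hsc
      have haL : a ≠ Fin.last m := by
        intro h; rw [h] at ha; simp [Fin.val_last] at ha; omega
      have hbL : b ≠ Fin.last m := by
        intro h; rw [h] at hb; simp [Fin.val_last] at hb; omega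
      obtain ⟨i, rfl⟩ := Fin.exists_castSucc_eq.mpr haL
      obtain ⟨j, rfl⟩ := Fin.exists_castSucc_eq.mpr hbL
      have : ((delE (Fin.last m) σ).2).SameCycle i j := by
        rw [delE_sameCycle]
        simp only [hsa]
        exact hsc
      exact hnc i j (by simpa using ha) (by simpa using hb)
        (fun h => hne (by rw [h])) this

lemma char3 (r r' : ℕ) (c : Fin (m + 1))
    (H1 : ∀ i : Fin m, ((i : ℕ) < r' ↔ ((c.succAbove i : ℕ) < r)))
    (τ : Equiv.Perm (Fin (m + 1))) :
    (τ c = c ∧ (∀ j, j ≠ c → τ j ≠ j) ∧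
        (∀ a b : Fin (m + 1), (a : ℕ) < r → (b : ℕ) < r → a ≠ b → ¬ τ.SameCycle a b)) ↔
      ((delE c τ).1 = none ∧ (delE c τ).2 ∈ gSet r' m) := by
  constructor
  · rintro ⟨hc, hfpf, hnc⟩
    refine ⟨by rw [delE_fst, hc]; exact finSuccEquiv'_at c, mem_gSet.mpr ⟨?_, ?_⟩⟩
    · intro j hjj
      have hne : τ (c.succAbove j) ≠ c := by
        intro h
        exact Fin.succAbove_ne c j (τ.injective (h.trans hc.symm))
      have := delE_snd_of_ne c τ j hne
      rw [hjj] at this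
      exact hfpf _ (Fin.succAbove_ne c j) this.symm
    · intro i j hi hj hne hsc
      rw [delE_sameCycle] at hsc
      exact hnc _ _ ((H1 i).mp hi) ((H1 j).mp hj)
        (fun h => hne (Fin.succAbove_right_injective h)) hsc
  · rintro ⟨hx, hτ⟩
    rw [mem_gSet] at hτ
    obtain ⟨hfpf, hnc⟩ := hτ
    have hc : τ c = c := by
      rw [delE_fst] at hx
      exact (fse_eq_none_iff c).mp hx
    refine ⟨hc, ?_, ?_⟩
    · intro j hj hjj
      obtain ⟨i, rfl⟩ := Fin.exists_succAbove_eq hj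
      have hne : τ (c.succAbove i) ≠ c := by rw [hjj]; exact hj
      have := delE_snd_of_ne c τ i hne
      rw [hjj] at this
      exact hfpf i (Fin.succAbove_right_injective this)
    · intro a b ha hb hne hsc
      by_cases hac : a = c
      · subst hac
        exact hne (hsc.eq_of_left hc)
      · by_cases hbc : b = c
        · subst hbc
          exact hne (hsc.symm.eq_of_left hc).symm
        · obtain ⟨i, rfl⟩ := Fin.exists_succAbove_eq hac
          obtain ⟨j, rfl⟩ := Fin.exists_succAbove_eq hbc
          have : ((delE c τ).2).SameCycle i j := by rw [delE_sameCycle]; exact hsc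
          exact hnc i j ((H1 i).mpr ha) ((H1 j).mpr hb)
            (fun h => hne (by rw [h])) this

end DRwork4

namespace DRwork5
open DRwork2 DRwork3 DRwork4

variable {r m : ℕ}

lemma card_eq_of_char {M : ℕ} (p : Fin (M + 1)) (x0 : Option (Fin M))
    (S : Finset (Equiv.Perm (Fin (M + 1)))) (T : Finset (Equiv.Perm (Fin M)))
    (h : ∀ σ, σ ∈ S ↔ ((delE p σ).1 = x0 ∧ (delE p σ).2 ∈ T)) :
    S.card = T.card := by
  apply Finset.card_bij' (fun σ _ => (delE p σ).2) (fun τ _ => (delE p).symm (x0, τ))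
  · intro a ha; exact ((h a).mp ha).2
  · intro τ hτ
    apply (h _).mpr
    rw [Equiv.apply_symm_apply]
    exact ⟨rfl, hτ⟩
  · intro a ha
    have hx := ((h a).mp ha).1
    rw [← hx, Prod.mk.eta, Equiv.symm_apply_apply]
  · intro τ hτ
    rw [Equiv.apply_symm_apply]

lemma card_filter_val_lt (M R : ℕ) (h : R ≤ M) :
    ((Finset.univ : Finset (Fin M)).filter (fun w : Fin M => (w : ℕ) < R)).card = R := by
  have heq : (Finset.univ : Finset (Fin M)).filter (fun w : Fin M => (w : ℕ) < R)
      = Finset.univ.map (Fin.castLEEmb h) := by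
    ext z
    simp only [Finset.mem_filter, Finset.mem_univ, true_and, Finset.mem_map,
      Fin.castLEEmb_apply]
    constructor
    · intro hz
      exact ⟨⟨(z : ℕ), hz⟩, by ext; simp⟩
    · rintro ⟨i, rfl⟩
      simp
  rw [heq, Finset.card_map]
  simp

lemma cardC (hrm : r ≤ m) :
    ((gSet r (m + 1)).filter (fun σ => ¬ σ (σ (Fin.last m)) = Fin.last m)).card
      = m * (gSet r m).card := by
  have hmap : ((gSet r (m + 1)).filter
        (fun σ => ¬ σ (σ (Fin.last m)) = Fin.last m)).map (delE (Fin.last m)).toEmbedding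
      = (Finset.univ.filter (fun x : Option (Fin m) => x ≠ none)) ×ˢ gSet r m := by
    ext z
    obtain ⟨x, τ⟩ := z
    rw [Finset.mem_map_equiv, Finset.mem_product, Finset.mem_filter, Finset.mem_filter]
    have h := charC hrm ((delE (Fin.last m)).symm (x, τ))
    rw [Equiv.apply_symm_apply] at h
    constructor
    · rintro ⟨hg, hc⟩
      obtain ⟨h1, h2⟩ := h.mp ⟨hg, hc⟩
      exact ⟨⟨Finset.mem_univ _, h1⟩, h2⟩
    · rintro ⟨⟨-, h1⟩, h2⟩
      exact h.mpr ⟨h1, h2⟩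
  have hcard := congrArg Finset.card hmap
  rw [Finset.card_map] at hcard
  rw [hcard, Finset.card_product]
  congr 1
  rw [Finset.filter_ne', Finset.card_erase_of_mem (Finset.mem_univ _)]
  simp

lemma H1_of_lt (c : Fin (m + 1)) (hc : (c : ℕ) < r) :
    ∀ i : Fin m, ((i : ℕ) < r - 1 ↔ ((c.succAbove i : ℕ) < r)) := by
  intro i
  rcases lt_or_ge (Fin.castSucc i) c with h | h
  · rw [Fin.succAbove_of_castSucc_lt _ _ h]
    have h' : (i : ℕ) < (c : ℕ) := by simpa [Fin.lt_def] using h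
    simp only [Fin.coe_castSucc]
    omega
  · rw [Fin.succAbove_of_le_castSucc _ _ h]
    have h' : (c : ℕ) ≤ (i : ℕ) := by simpa [Fin.le_def] using h
    simp only [Fin.val_succ]
    omega

lemma H1_of_ge (c : Fin (m + 1)) (hc : r ≤ (c : ℕ)) :
    ∀ i : Fin m, ((i : ℕ) < r ↔ ((c.succAbove i : ℕ) < r)) := by
  intro i
  rcases lt_or_ge (Fin.castSucc i) c with h | h
  · rw [Fin.succAbove_of_castSucc_lt _ _ h]
    simp only [Fin.coe_castSucc]
  · rw [Fin.succAbove_of_le_castSucc _ _ h]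
    have h' : (c : ℕ) ≤ (i : ℕ) := by simpa [Fin.le_def] using h
    simp only [Fin.val_succ]
    omega

lemma cardAB (hrm : r ≤ m + 1) (c : Fin (m + 1)) :
    ((gSet r (m + 2)).filter (fun σ => σ (Fin.last (m + 1)) = Fin.castSucc c ∧
        σ (Fin.castSucc c) = Fin.last (m + 1))).card
      = if (c : ℕ) < r then (gSet (r - 1) m).card else (gSet r m).card := by
  set r' : ℕ := if (c : ℕ) < r then r - 1 else r with hr'
  have H1 : ∀ i : Fin m, ((i : ℕ) < r' ↔ ((c.succAbove i : ℕ) < r)) := by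
    rw [hr']
    split
    · exact H1_of_lt c (by assumption)
    · exact H1_of_ge c (by omega)
  have step1 : ((gSet r (m + 2)).filter (fun σ => σ (Fin.last (m + 1)) = Fin.castSucc c ∧
        σ (Fin.castSucc c) = Fin.last (m + 1))).card
      = (Finset.univ.filter (fun τ : Equiv.Perm (Fin (m + 1)) =>
          τ c = c ∧ (∀ j, j ≠ c → τ j ≠ j) ∧
          (∀ i j : Fin (m + 1), (i : ℕ) < r → (j : ℕ) < r → i ≠ j →
            ¬ τ.SameCycle i j))).card := by
    apply card_eq_of_char (Fin.last (m + 1)) (some c)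
    intro σ
    rw [Finset.mem_filter]
    rw [show (σ ∈ gSet r (m + 2) ∧ σ (Fin.last (m + 1)) = Fin.castSucc c ∧
        σ (Fin.castSucc c) = Fin.last (m + 1)) ↔ _ from char2 hrm c σ]
    simp only [Finset.mem_filter, Finset.mem_univ, true_and]
  have step2 : (Finset.univ.filter (fun τ : Equiv.Perm (Fin (m + 1)) =>
          τ c = c ∧ (∀ j, j ≠ c → τ j ≠ j) ∧
          (∀ i j : Fin (m + 1), (i : ℕ) < r → (j : ℕ) < r → i ≠ j →
            ¬ τ.SameCycle i j))).card = (gSet r' m).card := by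
    apply card_eq_of_char c none
    intro τ
    rw [Finset.mem_filter]
    rw [show (τ c = c ∧ (∀ j, j ≠ c → τ j ≠ j) ∧
        (∀ a b : Fin (m + 1), (a : ℕ) < r → (b : ℕ) < r → a ≠ b → ¬ τ.SameCycle a b)) ↔ _ from
      char3 r r' c H1 τ]
    simp only [Finset.mem_univ, true_and]
  rw [step1, step2, hr']
  split <;> rfl

end DRwork5

namespace DRwork6
open DRwork2 DRwork3 DRwork4 DRwork5

variable {r m : ℕ}

lemma main (hr : 1 ≤ r) (hrm : r ≤ m + 1) :
    (gSet r (m + 2)).card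
      = r * (gSet (r - 1) m).card + (m + 1 - r) * (gSet r m).card
          + (m + 1) * (gSet r (m + 1)).card := by
  have hL : ((Fin.last (m + 1) : Fin (m + 2)) : ℕ) = m + 1 := rfl
  set A := (gSet (r - 1) m).card with hA
  set B := (gSet r m).card with hB
  have hpart := Finset.card_filter_add_card_filter_not
      (s := gSet r (m + 2)) (p := fun σ => σ (σ (Fin.last (m + 1))) = Fin.last (m + 1))
  have hC : ((gSet r (m + 2)).filter
        (fun σ => ¬ σ (σ (Fin.last (m + 1))) = Fin.last (m + 1))).card
      = (m + 1) * (gSet r (m + 1)).card := cardC hrm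
  have hfib : ((gSet r (m + 2)).filter
        (fun σ => σ (σ (Fin.last (m + 1))) = Fin.last (m + 1))).card
      = ∑ w : Fin (m + 2), (((gSet r (m + 2)).filter
          (fun σ => σ (σ (Fin.last (m + 1))) = Fin.last (m + 1))).filter
            (fun σ => σ (Fin.last (m + 1)) = w)).card :=
    Finset.card_eq_sum_card_fiberwise (fun σ _ => Finset.mem_univ _)
  -- identify each fiber
  have hfiber : ∀ w : Fin (m + 2),
      (((gSet r (m + 2)).filter
          (fun σ => σ (σ (Fin.last (m + 1))) = Fin.last (m + 1))).filter
            (fun σ => σ (Fin.last (m + 1)) = w)).card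
        = if (w : ℕ) < r then A else if w = Fin.last (m + 1) then 0 else B := by
    intro w
    by_cases hw : w = Fin.last (m + 1)
    · -- fiber is empty
      have : ∀ σ ∈ ((gSet r (m + 2)).filter
          (fun σ => σ (σ (Fin.last (m + 1))) = Fin.last (m + 1))),
          ¬ σ (Fin.last (m + 1)) = w := by
        intro σ hσ
        have hg := Finset.mem_of_mem_filter σ hσ
        rw [mem_gSet] at hg
        rw [hw]
        exact hg.1 _
      rw [Finset.filter_false_of_mem this]
      have hwr : ¬ (w : ℕ) < r := by rw [hw, hL]; omega
      rw [Finset.card_empty, if_neg hwr, if_pos hw]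
    · -- w = castSucc c
      have hwlt : (w : ℕ) < m + 1 := by
        have := Fin.lt_last_iff_ne_last.mpr hw
        simpa [Fin.lt_def] using this
      set c : Fin (m + 1) := ⟨(w : ℕ), hwlt⟩ with hc
      have hwc : w = Fin.castSucc c := by ext; simp [hc]
      have heq : (((gSet r (m + 2)).filter
          (fun σ => σ (σ (Fin.last (m + 1))) = Fin.last (m + 1))).filter
            (fun σ => σ (Fin.last (m + 1)) = w))
          = (gSet r (m + 2)).filter (fun σ => σ (Fin.last (m + 1)) = Fin.castSucc c ∧
            σ (Fin.castSucc c) = Fin.last (m + 1)) := by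
        rw [Finset.filter_filter]
        apply Finset.filter_congr
        intro σ hσ
        constructor
        · rintro ⟨h1, h2⟩
          rw [hwc] at h2
          refine ⟨h2, ?_⟩
          rw [← h2]
          exact h1
        · rintro ⟨h1, h2⟩
          rw [hwc]
          exact ⟨by rw [h1]; exact h2, h1⟩
      rw [heq, cardAB hrm c]
      have : ((c : ℕ)) = (w : ℕ) := by simp [hc]
      rw [this]
      by_cases hwr : (w : ℕ) < r <;> simp [hwr, hw] <;> rfl
  -- sum it up
  have hsum : ∑ w : Fin (m + 2), (((gSet r (m + 2)).filter
          (fun σ => σ (σ (Fin.last (m + 1))) = Fin.last (m + 1))).filter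
            (fun σ => σ (Fin.last (m + 1)) = w)).card
      = r * A + (m + 1 - r) * B := by
    rw [Finset.sum_congr rfl (fun w _ => hfiber w), Finset.sum_ite]
    have h1 : (∑ _w ∈ Finset.univ.filter (fun w : Fin (m + 2) => (w : ℕ) < r),
        A) = r * A := by
      rw [Finset.sum_const, card_filter_val_lt (m + 2) r (by omega), smul_eq_mul]
    have hs2card : (Finset.univ.filter (fun w : Fin (m + 2) => ¬ (w : ℕ) < r)).card
        = m + 2 - r := by
      have htot := Finset.card_filter_add_card_filter_not
        (s := (Finset.univ : Finset (Fin (m + 2)))) (p := fun w : Fin (m + 2) => (w : ℕ) < r)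
      rw [card_filter_val_lt (m + 2) r (by omega)] at htot
      have hcu : (Finset.univ : Finset (Fin (m + 2))).card = m + 2 := by simp
      omega
    have hLmem : (Fin.last (m + 1) : Fin (m + 2)) ∈
        Finset.univ.filter (fun w : Fin (m + 2) => ¬ (w : ℕ) < r) := by
      rw [Finset.mem_filter]
      refine ⟨Finset.mem_univ _, ?_⟩
      rw [hL]
      omega
    have h2 : (∑ w ∈ Finset.univ.filter (fun w : Fin (m + 2) => ¬ (w : ℕ) < r),
        if w = Fin.last (m + 1) then 0 else B) = (m + 1 - r) * B := by
      rw [← Finset.insert_erase hLmem, Finset.sum_insert (Finset.notMem_erase _ _)]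
      rw [if_pos rfl, zero_add]
      rw [Finset.sum_congr rfl (fun w hw => if_neg (Finset.ne_of_mem_erase hw))]
      rw [Finset.sum_const, Finset.card_erase_of_mem hLmem, hs2card, smul_eq_mul]
      congr 1
      omega
    rw [h1, h2]
  rw [← hpart, hfib, hsum, hC]

end DRwork6

namespace DRwork7
open DRwork2 DRwork3 DRwork4 DRwork5 DRwork6

lemma rDerSet_eq_gSet (r n : ℕ) : rDerSet r n = gSet r (r + n) := rfl

lemma gSet_card_eq (r n M : ℕ) (h : M = r + n) : (gSet r M).card = Dr r n := by
  subst h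
  rfl

-- Part 2 : n < r → Dr r n = 0
lemma part2 {r n : ℕ} (h : n < r) : Dr r n = 0 := by
  rw [Dr, Finset.card_eq_zero, Finset.eq_empty_iff_forall_notMem]
  intro σ hσ
  rw [rDerSet_eq_gSet, mem_gSet] at hσ
  obtain ⟨hfpf, hnc⟩ := hσ
  have hsmall : ∀ x : Fin (r + n), (x : ℕ) < r → r ≤ (σ x : ℕ) := by
    intro x hx
    by_contra hc
    push_neg at hc
    exact hnc x (σ x) hx hc (Ne.symm (hfpf x)) ⟨1, by simp⟩
  have hmaps : ∀ a ∈ (Finset.univ : Finset (Fin (r + n))).filter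
      (fun w : Fin (r + n) => (w : ℕ) < r),
      σ a ∈ (Finset.univ : Finset (Fin (r + n))).filter
        (fun w : Fin (r + n) => ¬ (w : ℕ) < r) := by
    intro a ha
    rw [Finset.mem_filter] at ha ⊢
    exact ⟨Finset.mem_univ _, not_lt.mpr (hsmall a ha.2)⟩
  have hinj : Set.InjOn σ ((Finset.univ : Finset (Fin (r + n))).filter
      (fun w : Fin (r + n) => (w : ℕ) < r)) := fun a _ b _ hab => σ.injective hab
  have hle := Finset.card_le_card_of_injOn σ hmaps hinj
  rw [card_filter_val_lt (r + n) r (by omega)] at hle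
  have htot := Finset.card_filter_add_card_filter_not
    (s := (Finset.univ : Finset (Fin (r + n)))) (p := fun w : Fin (r + n) => (w : ℕ) < r)
  rw [card_filter_val_lt (r + n) r (by omega)] at htot
  have hcu : (Finset.univ : Finset (Fin (r + n))).card = r + n := by simp
  omega

-- Part 3 : Dr r r = r!
noncomputable def Gp (r : ℕ) (π : Equiv.Perm (Fin r)) : Equiv.Perm (Fin (r + r)) :=
  finSumFinEquiv.permCongr ((Equiv.sumCongr π π.symm).trans (Equiv.sumComm (Fin r) (Fin r)))

lemma Gp_castAdd (r : ℕ) (π : Equiv.Perm (Fin r)) (i : Fin r) :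
    Gp r π (Fin.castAdd r i) = Fin.natAdd r (π i) := by
  simp [Gp, Equiv.permCongr_apply, finSumFinEquiv_symm_apply_castAdd]

lemma Gp_natAdd (r : ℕ) (π : Equiv.Perm (Fin r)) (j : Fin r) :
    Gp r π (Fin.natAdd r j) = Fin.castAdd r (π.symm j) := by
  rw [Gp, Equiv.permCongr_apply, finSumFinEquiv_symm_apply_natAdd]
  have h1 : ((Equiv.sumCongr π π.symm).trans (Equiv.sumComm (Fin r) (Fin r))) (Sum.inr j)
      = Sum.inl (π.symm j) := rfl
  rw [h1, finSumFinEquiv_apply_left]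

lemma fin_add_cases (r : ℕ) (x : Fin (r + r)) :
    (∃ i : Fin r, x = Fin.castAdd r i) ∨ (∃ j : Fin r, x = Fin.natAdd r j) := by
  rcases h : finSumFinEquiv.symm x with i | j
  · left
    refine ⟨i, ?_⟩
    have := congrArg finSumFinEquiv h
    rw [Equiv.apply_symm_apply] at this
    rw [this]
    rfl
  · right
    refine ⟨j, ?_⟩
    have := congrArg finSumFinEquiv h
    rw [Equiv.apply_symm_apply] at this
    rw [this]
    rfl

lemma Gp_invol (r : ℕ) (π : Equiv.Perm (Fin r)) (x : Fin (r + r)) :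
    Gp r π (Gp r π x) = x := by
  rcases fin_add_cases r x with ⟨i, rfl⟩ | ⟨j, rfl⟩
  · rw [Gp_castAdd, Gp_natAdd, Equiv.symm_apply_apply]
  · rw [Gp_natAdd, Gp_castAdd, Equiv.apply_symm_apply]

lemma invol_zpow {β : Type*} (σ : Equiv.Perm β) (hσ : ∀ x, σ (σ x) = x) (k : ℤ) :
    σ ^ k = 1 ∨ σ ^ k = σ := by
  have h2 : σ * σ = 1 := by
    ext x
    simp [Equiv.Perm.mul_apply, hσ]
  have hsq : σ ^ (2 : ℤ) = 1 := by
    rw [show (2 : ℤ) = 1 + 1 by norm_num, zpow_add, zpow_one]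
    exact h2
  rcases Int.even_or_odd k with ⟨t, ht⟩ | ⟨t, ht⟩
  · left
    rw [ht, show t + t = 2 * t by ring, zpow_mul, hsq, one_zpow]
  · right
    rw [ht, zpow_add, zpow_mul, hsq, one_zpow, zpow_one, one_mul]

lemma Gp_mem (r : ℕ) (π : Equiv.Perm (Fin r)) : Gp r π ∈ rDerSet r r := by
  rw [rDerSet_eq_gSet, mem_gSet]
  constructor
  · intro x
    rcases fin_add_cases r x with ⟨i, rfl⟩ | ⟨j, rfl⟩
    · rw [Gp_castAdd]
      intro h
      have := congrArg Fin.val h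
      simp at this
      omega
    · rw [Gp_natAdd]
      intro h
      have := congrArg Fin.val h
      simp at this
      have h1 := (π.symm j).isLt
      omega
  · rintro x y hx hy hne ⟨k, hk⟩
    rcases invol_zpow (Gp r π) (Gp_invol r π) k with h | h
    · rw [h] at hk
      exact hne (by simpa using hk)
    · rw [h] at hk
      -- y = Gp r π x with x small, so y is big: contradiction
      have hxe : x = Fin.castAdd r ⟨(x : ℕ), hx⟩ := by ext; simp
      rw [hxe, Gp_castAdd] at hk
      have := congrArg Fin.val hk
      simp at this
      omega

lemma Gp_inj (r : ℕ) : Function.Injective (Gp r) := by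
  intro π π' h
  ext i
  have := congrArg (fun σ : Equiv.Perm (Fin (r + r)) => σ (Fin.castAdd r i)) h
  simp only [Gp_castAdd] at this
  have := congrArg Fin.val this
  simpa using this

lemma exists_pi {r : ℕ} (σ : Equiv.Perm (Fin (r + r))) (hσ : σ ∈ rDerSet r r) :
    ∃ π : Equiv.Perm (Fin r), Gp r π = σ := by
  rw [rDerSet_eq_gSet, mem_gSet] at hσ
  obtain ⟨hfpf, hnc⟩ := hσ
  have hsmall : ∀ i : Fin r, r ≤ (σ (Fin.castAdd r i) : ℕ) := by
    intro i
    by_contra hc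
    push_neg at hc
    exact hnc (Fin.castAdd r i) (σ (Fin.castAdd r i)) (by simp) hc
      (Ne.symm (hfpf _)) ⟨1, by simp⟩
  set fs : Fin r → Fin r := fun i =>
    ⟨(σ (Fin.castAdd r i) : ℕ) - r, by
      have h1 := (σ (Fin.castAdd r i)).isLt
      have h2 := hsmall i
      omega⟩ with hfs
  have hball : ∀ i : Fin r, σ (Fin.castAdd r i) = Fin.natAdd r (fs i) := by
    intro i
    ext
    have h2 := hsmall i
    simp [hfs]
    omega
  have hinj : Function.Injective fs := by
    intro i j hij
    have h1 := congrArg Fin.val hij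
    simp [hfs] at h1
    have h2 := hsmall i
    have h3 := hsmall j
    have h4 : σ (Fin.castAdd r i) = σ (Fin.castAdd r j) := by ext; omega
    have h5 := σ.injective h4
    have := congrArg Fin.val h5
    simp at this
    exact Fin.ext this
  have hbij : Function.Bijective fs := Finite.injective_iff_bijective.mp hinj
  set π : Equiv.Perm (Fin r) := Equiv.ofBijective fs hbij with hπ
  have hπap : ∀ i, π i = fs i := fun i => rfl
  have key : ∀ i : Fin r, σ (Fin.natAdd r (fs i)) = Fin.castAdd r i := by
    intro i
    by_cases hc : (σ (Fin.natAdd r (fs i)) : ℕ) < r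
    · have hsc : σ.SameCycle (Fin.castAdd r i) (σ (Fin.natAdd r (fs i))) := by
        refine ⟨2, ?_⟩
        have : (σ ^ (2 : ℤ)) (Fin.castAdd r i) = σ (σ (Fin.castAdd r i)) := by
          rw [show (2 : ℤ) = 1 + 1 by norm_num, zpow_add, zpow_one]
          simp [Equiv.Perm.mul_apply]
        rw [this, hball i]
      by_contra hne'
      exact hnc (Fin.castAdd r i) (σ (Fin.natAdd r (fs i))) (by simp) hc
        (fun h => hne' h.symm) hsc
    · exfalso
      push_neg at hc
      have hlt : (σ (Fin.natAdd r (fs i)) : ℕ) - r < r := by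
        have := (σ (Fin.natAdd r (fs i))).isLt
        omega
      obtain ⟨j0, hj0⟩ := hbij.surjective ⟨(σ (Fin.natAdd r (fs i)) : ℕ) - r, hlt⟩
      have heq2 : σ (Fin.castAdd r j0) = σ (Fin.natAdd r (fs i)) := by
        rw [hball j0, hj0]
        apply Fin.ext
        show r + ((σ (Fin.natAdd r (fs i)) : ℕ) - r) = (σ (Fin.natAdd r (fs i)) : ℕ)
        omega
      have hbj := σ.injective heq2
      have := congrArg Fin.val hbj
      simp at this
      omega
  refine ⟨π, ?_⟩
  ext x
  rcases fin_add_cases r x with ⟨i, rfl⟩ | ⟨j, rfl⟩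
  · rw [Gp_castAdd, hπap, ← hball]
  · rw [Gp_natAdd]
    have hj : fs (π.symm j) = j := by
      have := Equiv.apply_symm_apply π j
      rw [hπap] at this
      exact this
    conv_rhs => rw [← hj]
    rw [key]

lemma part3 (r : ℕ) : Dr r r = Nat.factorial r := by
  have himg : rDerSet r r = Finset.univ.image (fun π : Equiv.Perm (Fin r) => Gp r π) := by
    ext σ
    simp only [Finset.mem_image, Finset.mem_univ, true_and]
    constructor
    · intro h
      exact exists_pi σ h
    · rintro ⟨π, rfl⟩
      exact Gp_mem r π
  rw [Dr, himg, Finset.card_image_of_injective _ (Gp_inj r), Finset.card_univ]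
  simp [Fintype.card_perm, Fintype.card_fin]

end DRwork7

theorem Dr_recurrence (r n : ℕ) (hr : 1 ≤ r) :
    (2 ≤ n →
      Dr r n =
        r * Dr (r - 1) (n - 1) + (n - 1) * Dr r (n - 2) + (n + r - 1) * Dr r (n - 1)) ∧
    (n < r → Dr r n = 0) ∧
    Dr r r = Nat.factorial r := by
  refine ⟨?_, fun h => DRwork7.part2 h, DRwork7.part3 r⟩
  intro hn
  have hm := DRwork6.main (r := r) (m := r + n - 2) hr (by omega)
  have e0 : (DRwork3.gSet r (r + n - 2 + 2)).card = Dr r n :=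
    DRwork7.gSet_card_eq r n _ (by omega)
  have e1 : (DRwork3.gSet (r - 1) (r + n - 2)).card = Dr (r - 1) (n - 1) :=
    DRwork7.gSet_card_eq (r - 1) (n - 1) _ (by omega)
  have e2 : (DRwork3.gSet r (r + n - 2)).card = Dr r (n - 2) :=
    DRwork7.gSet_card_eq r (n - 2) _ (by omega)
  have e3 : (DRwork3.gSet r (r + n - 2 + 1)).card = Dr r (n - 1) :=
    DRwork7.gSet_card_eq r (n - 1) _ (by omega)
  rw [e0, e1, e2, e3] at hm
  have c1 : r + n - 2 + 1 - r = n - 1 := by omega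
  have c2 : r + n - 2 + 1 = n + r - 1 := by omega
  rw [c1, c2] at hm
  exact hm
end

section
/- For every natural number n ≥ 1 and i ∈ {0,1}, the number of derangements of {1,...,n} with parity i equals (1/2)(D(n) − (−1)^{n+i}(n−1)), where D(n) is the total number of derangements of {1,...,n}. -/
open scoped Classical

/-- The set of derangements of `{0, …, n-1}`. -/
noncomputable def derSet (n : ℕ) : Finset (Equiv.Perm (Fin n)) :=
  Finset.univ.filter (fun σ => ∀ x, σ x ≠ x)

lemma det_J_sub_one (n : ℕ) :
    (Matrix.of (fun i j : Fin n => if i = j then (0:ℤ) else 1)).det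
      = (-1)^n * (1 - n) := by
  have h : (Matrix.of (fun i j : Fin n => if i = j then (0:ℤ) else 1))
      = -(1 + Matrix.replicateCol Unit (fun _ : Fin n => (-1:ℤ)) *
          Matrix.replicateRow Unit (fun _ : Fin n => (1:ℤ))) := by
    ext i j
    simp [Matrix.mul_apply, Matrix.one_apply, Matrix.replicateCol, Matrix.replicateRow]
    split <;> ring
  rw [h, Matrix.det_neg, Matrix.det_one_add_replicateCol_mul_replicateRow]
  simp [dotProduct]
  ring

lemma signSumDer (n : ℕ) :
    ∑ σ ∈ derSet n, (Equiv.Perm.sign σ : ℤ) = (-1)^n * (1 - n) := by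
  rw [← det_J_sub_one n, Matrix.det_apply]
  rw [← Finset.sum_filter_add_sum_filter_not Finset.univ (fun σ => ∀ x, σ x ≠ x)]
  have h1 : ∀ σ ∈ Finset.univ.filter (fun σ : Equiv.Perm (Fin n) => ∀ x, σ x ≠ x),
      Equiv.Perm.sign σ • ∏ i, Matrix.of (fun i j : Fin n => if i = j then (0:ℤ) else 1) (σ i) i
        = (Equiv.Perm.sign σ : ℤ) := by
    intro σ hσ
    simp only [Finset.mem_filter] at hσ
    have : ∏ i, Matrix.of (fun i j : Fin n => if i = j then (0:ℤ) else 1) (σ i) i = 1 := by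
      apply Finset.prod_eq_one
      intro i _
      simp [hσ.2 i]
    rw [this]; simp [Units.smul_def]
  have h2 : ∀ σ ∈ Finset.univ.filter (fun σ : Equiv.Perm (Fin n) => ¬ ∀ x, σ x ≠ x),
      Equiv.Perm.sign σ • ∏ i, Matrix.of (fun i j : Fin n => if i = j then (0:ℤ) else 1) (σ i) i
        = (0:ℤ) := by
    intro σ hσ
    simp only [Finset.mem_filter, not_forall, not_not] at hσ
    obtain ⟨x, hx⟩ := hσ.2
    have : ∏ i, Matrix.of (fun i j : Fin n => if i = j then (0:ℤ) else 1) (σ i) i = 0 := by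
      apply Finset.prod_eq_zero (Finset.mem_univ x)
      simp [hx]
    rw [this]; simp
  rw [Finset.sum_congr rfl h1, Finset.sum_congr rfl h2]
  simp [derSet]

theorem derangements_parity_count (n i : ℕ) (hn : 1 ≤ n) (hi : i ≤ 1) :
    (2 * ((derSet n).filter (fun σ => parity σ = i)).card : ℤ) =
      ((derSet n).card : ℤ) - (-1) ^ (n + i) * ((n : ℤ) - 1) := by
  have hsum := signSumDer n
  have hfe : (derSet n).filter (fun σ => ¬ parity σ = 0)
      = (derSet n).filter (fun σ => parity σ = 1) := by
    apply Finset.filter_congr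
    intro σ _
    unfold parity
    split <;> simp
  have hpart : ((derSet n).filter (fun σ => parity σ = 0)).card
      + ((derSet n).filter (fun σ => parity σ = 1)).card = (derSet n).card := by
    rw [← hfe]
    exact Finset.card_filter_add_card_filter_not (p := fun σ => parity σ = 0)
  have hsplit : ∑ σ ∈ derSet n, (Equiv.Perm.sign σ : ℤ)
      = ((derSet n).filter (fun σ => parity σ = 0)).card
        - ((derSet n).filter (fun σ => parity σ = 1)).card := by
    rw [← Finset.sum_filter_add_sum_filter_not (derSet n) (fun σ => parity σ = 0)]
    have e0 : ∑ σ ∈ (derSet n).filter (fun σ => parity σ = 0), (Equiv.Perm.sign σ : ℤ)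
        = ((derSet n).filter (fun σ => parity σ = 0)).card := by
      rw [Finset.sum_congr rfl (fun σ hσ => ?_), Finset.sum_const, nsmul_eq_mul, mul_one]
      simp only [Finset.mem_filter] at hσ
      unfold parity at hσ
      rcases hσ.2 with h
      split at h
      · next hs => simp [hs]
      · simp at h
    have e1 : ∑ σ ∈ (derSet n).filter (fun σ => ¬ parity σ = 0), (Equiv.Perm.sign σ : ℤ)
        = -((derSet n).filter (fun σ => parity σ = 1)).card := by
      have : (derSet n).filter (fun σ => ¬ parity σ = 0)
          = (derSet n).filter (fun σ => parity σ = 1) := by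
        apply Finset.filter_congr
        intro σ _
        unfold parity
        split <;> simp
      rw [this, Finset.sum_congr rfl (fun σ hσ => ?_), Finset.sum_const, nsmul_eq_mul, mul_neg_one]
      simp only [Finset.mem_filter] at hσ
      unfold parity at hσ
      rcases hσ.2 with h
      split at h
      · simp at h
      · next hs =>
        rcases Int.units_eq_one_or (Equiv.Perm.sign σ) with h' | h'
        · exact absurd h' hs
        · simp [h']
    rw [e0, e1]; ring
  interval_cases i
  · have : (2 * (((derSet n).filter (fun σ => parity σ = 0)).card : ℤ))
        = ((derSet n).card : ℤ) + (-1)^n * (1 - n) := by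
      rw [← hsum, hsplit, ← hpart]; push_cast; ring
    rw [this]; ring_nf
  · have : (2 * (((derSet n).filter (fun σ => parity σ = 1)).card : ℤ))
        = ((derSet n).card : ℤ) - (-1)^n * (1 - n) := by
      rw [← hsum, hsplit, ← hpart]; push_cast; ring
    rw [this]; ring_nf
end

section
/- For all natural numbers r and n, D(r,n) = r! · D_r(n), where D(r,n) is the number of fixed-point-free permutations σ of {1,...,r+n} such that σ(i) ∉ {1,...,r} for every i ∈ {1,...,r}, and D_r(n) is the number of r-derangements. -/
open scoped Classical

/-- The set of block derangements: fixed-point-free permutations `σ` of `{0,…,r+n-1}`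
with `σ x` outside the first `r` elements for every `x` among the first `r` elements. -/
noncomputable def blockDerSet (r n : ℕ) : Finset (Equiv.Perm (Fin (r + n))) :=
  Finset.univ.filter (fun σ =>
    (∀ x, σ x ≠ x) ∧ ∀ x : Fin (r + n), (x : ℕ) < r → ¬ ((σ x : ℕ) < r))

section AuxProof

open Equiv Equiv.Perm

variable {r n : ℕ}

/-- Extend a permutation of the first `r` elements to `Fin (r+n)` by the identity. -/
noncomputable def extPerm (r n : ℕ) (τ : Equiv.Perm (Fin r)) : Equiv.Perm (Fin (r + n)) where
  toFun x := if h : (x : ℕ) < r then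
      ⟨(τ ⟨(x : ℕ), h⟩ : Fin r), Nat.lt_of_lt_of_le (Fin.is_lt _) (Nat.le_add_right r n)⟩ else x
  invFun x := if h : (x : ℕ) < r then
      ⟨(τ⁻¹ ⟨(x : ℕ), h⟩ : Fin r), Nat.lt_of_lt_of_le (Fin.is_lt _) (Nat.le_add_right r n)⟩ else x
  left_inv x := by
    by_cases h : (x : ℕ) < r
    · simp only [dif_pos h, Fin.is_lt, dif_pos]
      ext
      simp
    · simp only [dif_neg h]
  right_inv x := by
    by_cases h : (x : ℕ) < r
    · simp only [dif_pos h, Fin.is_lt, dif_pos]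
      ext
      simp
    · simp only [dif_neg h]

lemma extPerm_lt (τ : Equiv.Perm (Fin r)) {x : Fin (r + n)} (h : (x : ℕ) < r) :
    extPerm r n τ x = ⟨(τ ⟨(x : ℕ), h⟩ : Fin r),
      Nat.lt_of_lt_of_le (Fin.is_lt _) (Nat.le_add_right r n)⟩ := by
  simp [extPerm, dif_pos h]

lemma extPerm_val_lt (τ : Equiv.Perm (Fin r)) {x : Fin (r + n)} (h : (x : ℕ) < r) :
    ((extPerm r n τ x : Fin (r + n)) : ℕ) < r := by
  rw [extPerm_lt τ h]; exact (τ ⟨(x : ℕ), h⟩).is_lt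

lemma extPerm_of_ge (τ : Equiv.Perm (Fin r)) {x : Fin (r + n)} (h : ¬ (x : ℕ) < r) :
    extPerm r n τ x = x := by
  simp [extPerm, dif_neg h]

lemma extPerm_inv (τ : Equiv.Perm (Fin r)) :
    (extPerm r n τ)⁻¹ = extPerm r n τ⁻¹ :=
  Equiv.ext fun _ => rfl

lemma mem_rDerSet' {σ : Equiv.Perm (Fin (r + n))} :
    σ ∈ rDerSet r n ↔ (∀ x, σ x ≠ x) ∧
      (∀ x y : Fin (r + n), (x : ℕ) < r → (y : ℕ) < r → x ≠ y → ¬ σ.SameCycle x y) := by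
  simp [rDerSet]

lemma mem_blockDerSet' {σ : Equiv.Perm (Fin (r + n))} :
    σ ∈ blockDerSet r n ↔ (∀ x, σ x ≠ x) ∧
      ∀ x : Fin (r + n), (x : ℕ) < r → ¬ ((σ x : ℕ) < r) := by
  simp [blockDerSet]

lemma rDer_pow {σ : Equiv.Perm (Fin (r + n))} (hσ : σ ∈ rDerSet r n)
    {x : Fin (r + n)} (hx : (x : ℕ) < r) {j : ℕ}
    (hj : (((σ ^ j) x : Fin (r + n)) : ℕ) < r) : (σ ^ j) x = x := by
  by_contra hne
  exact (mem_rDerSet'.mp hσ).2 x ((σ ^ j) x) hx hj (Ne.symm hne)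
    ⟨(j : ℤ), by rw [zpow_natCast]⟩

lemma rDer_lt {σ : Equiv.Perm (Fin (r + n))} (hσ : σ ∈ rDerSet r n)
    {x : Fin (r + n)} (hx : (x : ℕ) < r) : ¬ ((σ x : ℕ) < r) := by
  intro h
  have h1 : (σ ^ 1) x = x := rDer_pow hσ hx (by simpa using h)
  exact (mem_rDerSet'.mp hσ).1 x (by simpa using h1)

/-- Iteration lemma: if `ρ` and `σ` agree outside the first `r` elements and
`ρ x = σ w`, then powers agree as long as the intermediate values stay outside. -/
lemma iter_eq (ρ σ : Equiv.Perm (Fin (r + n)))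
    (hout : ∀ z : Fin (r + n), ¬ ((z : ℕ) < r) → ρ z = σ z)
    (x w : Fin (r + n)) (h1 : ρ x = σ w) :
    ∀ j : ℕ, (∀ i, 1 ≤ i → i ≤ j → ¬ ((((σ ^ i) w : Fin (r + n)) : ℕ) < r)) →
      (ρ ^ (j + 1)) x = (σ ^ (j + 1)) w := by
  intro j
  induction j with
  | zero => intro _; simpa using h1
  | succ j ih =>
    intro hyp
    have h' : (ρ ^ (j + 1)) x = (σ ^ (j + 1)) w :=
      ih fun i h1i hij => hyp i h1i (Nat.le_succ_of_le hij)
    have hmid : ¬ ((((σ ^ (j + 1)) w : Fin (r + n)) : ℕ) < r) :=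
      hyp (j + 1) (Nat.succ_le_succ (Nat.zero_le j)) le_rfl
    calc (ρ ^ (j + 2)) x = ρ ((ρ ^ (j + 1)) x) := by
          rw [pow_succ' ρ (j + 1), Equiv.Perm.mul_apply]
      _ = ρ ((σ ^ (j + 1)) w) := by rw [h']
      _ = σ ((σ ^ (j + 1)) w) := hout _ hmid
      _ = (σ ^ (j + 2)) w := by rw [pow_succ' σ (j + 1), Equiv.Perm.mul_apply]

lemma exists_return (ρ : Equiv.Perm (Fin (r + n))) (x : Fin (r + n)) (hx : (x : ℕ) < r) :
    ∃ k, 1 ≤ k ∧ ((((ρ ^ k) x : Fin (r + n))) : ℕ) < r :=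
  ⟨orderOf ρ, orderOf_pos ρ, by rw [pow_orderOf_eq_one]; simpa using hx⟩

/-- Key lemma: for an `r`-derangement `σ` and `ρ = σ * extPerm τ`, the first return of
`x ∈ [r]` to `[r]` under `ρ` is `extPerm τ x`. -/
lemma first_return_eq {σ : Equiv.Perm (Fin (r + n))} (hσ : σ ∈ rDerSet r n)
    (τ : Equiv.Perm (Fin r)) {x : Fin (r + n)} (hx : (x : ℕ) < r) :
    ∃ K, 1 ≤ K ∧ ((σ * extPerm r n τ) ^ K) x = extPerm r n τ x ∧
      ∀ j, 1 ≤ j → j < K → ¬ ((((σ * extPerm r n τ) ^ j) x : Fin (r + n)) : ℕ) < r := by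
  set ρ := σ * extPerm r n τ with hρ
  set w := extPerm r n τ x with hw
  have hwlt : (w : ℕ) < r := extPerm_val_lt τ hx
  have hex : ∃ k, 1 ≤ k ∧ (σ ^ k) w = w :=
    ⟨orderOf σ, orderOf_pos σ, by rw [pow_orderOf_eq_one]; rfl⟩
  classical
  set K := Nat.find hex with hK
  obtain ⟨hK1, hKw⟩ := Nat.find_spec hex
  have hKmin : ∀ j, j < K → ¬ (1 ≤ j ∧ (σ ^ j) w = w) := fun j hj => Nat.find_min hex hj
  have hmid : ∀ i, 1 ≤ i → i < K → ¬ ((((σ ^ i) w : Fin (r + n)) : ℕ) < r) := by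
    intro i h1 hiK hlt
    exact hKmin i hiK ⟨h1, rDer_pow hσ hwlt hlt⟩
  have hρx : ρ x = σ w := by rw [hρ, Equiv.Perm.mul_apply]
  have hout : ∀ z : Fin (r + n), ¬ ((z : ℕ) < r) → ρ z = σ z := by
    intro z hz
    rw [hρ, Equiv.Perm.mul_apply, extPerm_of_ge τ hz]
  have hiter : ∀ j, 1 ≤ j → j ≤ K → (ρ ^ j) x = (σ ^ j) w := by
    intro j h1 hjK
    obtain ⟨j', rfl⟩ : ∃ j', j = j' + 1 := ⟨j - 1, by omega⟩
    exact iter_eq ρ σ hout x w hρx j' fun i hi1 hij => hmid i hi1 (by omega)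
  refine ⟨K, hK1, ?_, ?_⟩
  · rw [hiter K hK1 le_rfl, hKw]
  · intro j h1 hjK hlt
    rw [hiter j h1 (Nat.le_of_lt hjK)] at hlt
    exact hmid j h1 hjK hlt

end AuxProof

theorem blockDer_card_eq (r n : ℕ) :
    (blockDerSet r n).card = Nat.factorial r * Dr r n := by
  classical
  have hcard : ((Finset.univ : Finset (Equiv.Perm (Fin r))) ×ˢ rDerSet r n).card =
      Nat.factorial r * Dr r n := by
    rw [Finset.card_product, Finset.card_univ, Fintype.card_perm, Fintype.card_fin]
    rfl
  rw [← hcard]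
  refine (Finset.card_bij (fun p _ => p.2 * extPerm r n p.1) ?_ ?_ ?_).symm
  · -- maps into blockDerSet
    rintro ⟨τ, σ⟩ hp
    have hσ : σ ∈ rDerSet r n := (Finset.mem_product.mp hp).2
    rw [mem_blockDerSet']
    constructor
    · intro x
      by_cases h : (x : ℕ) < r
      · intro he
        have h2 : ¬ ((σ (extPerm r n τ x) : ℕ) < r) := rDer_lt hσ (extPerm_val_lt τ h)
        rw [Equiv.Perm.mul_apply] at he
        rw [he] at h2
        exact h2 h
      · rw [Equiv.Perm.mul_apply, extPerm_of_ge τ h]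
        exact (mem_rDerSet'.mp hσ).1 x
    · intro x hx
      rw [Equiv.Perm.mul_apply]
      exact rDer_lt hσ (extPerm_val_lt τ hx)
  · -- injective
    rintro ⟨τ₁, σ₁⟩ hp₁ ⟨τ₂, σ₂⟩ hp₂ he
    have hσ₁ : σ₁ ∈ rDerSet r n := (Finset.mem_product.mp hp₁).2
    have hσ₂ : σ₂ ∈ rDerSet r n := (Finset.mem_product.mp hp₂).2
    simp only at he
    have hE : extPerm r n τ₁ = extPerm r n τ₂ := by
      apply Equiv.ext
      intro x
      by_cases hx : (x : ℕ) < r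
      · obtain ⟨K₁, hK₁1, hK₁e, hK₁min⟩ := first_return_eq hσ₁ τ₁ hx
        obtain ⟨K₂, hK₂1, hK₂e, hK₂min⟩ := first_return_eq hσ₂ τ₂ hx
        rw [he] at hK₁e hK₁min
        have hKK : K₁ = K₂ := by
          by_contra hne
          rcases Nat.lt_or_ge K₁ K₂ with h | h
          · exact hK₂min K₁ hK₁1 h (by rw [hK₁e]; exact extPerm_val_lt τ₁ hx)
          · have h' : K₂ < K₁ := lt_of_le_of_ne h (fun e => hne e.symm)
            exact hK₁min K₂ hK₂1 h' (by rw [hK₂e]; exact extPerm_val_lt τ₂ hx)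
        rw [← hK₁e, ← hK₂e, hKK]
      · rw [extPerm_of_ge τ₁ hx, extPerm_of_ge τ₂ hx]
    have hτ : τ₁ = τ₂ := by
      apply Equiv.ext
      intro a
      have ha : ((⟨(a : ℕ), Nat.lt_of_lt_of_le a.is_lt (Nat.le_add_right r n)⟩ :
          Fin (r + n)) : ℕ) < r := a.is_lt
      have := congrArg (fun f => f (⟨(a : ℕ), Nat.lt_of_lt_of_le a.is_lt
        (Nat.le_add_right r n)⟩ : Fin (r + n))) (congrArg Equiv.toFun hE)
      simp only [extPerm, dif_pos ha] at this
      have hval := congrArg Fin.val this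
      simp only at hval
      apply Fin.ext
      simpa using hval
    have hσ : σ₁ = σ₂ := by
      rw [hτ] at he
      exact mul_right_cancel he
    rw [Prod.mk.injEq]
    exact ⟨hτ, hσ⟩
  · -- surjective
    intro ρ hρmem
    rw [mem_blockDerSet'] at hρmem
    obtain ⟨hfpf, hblk⟩ := hρmem
    set emb : Fin r → Fin (r + n) :=
      fun a => ⟨(a : ℕ), Nat.lt_of_lt_of_le a.is_lt (Nat.le_add_right r n)⟩ with hemb
    have hembval : ∀ a : Fin r, ((emb a : Fin (r + n)) : ℕ) = (a : ℕ) := fun a => rfl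
    have hemblt : ∀ a : Fin r, ((emb a : Fin (r + n)) : ℕ) < r := fun a => a.is_lt
    set K : Fin r → ℕ := fun a => Nat.find (exists_return ρ (emb a) (hemblt a)) with hKdef
    have hKspec : ∀ a : Fin r, 1 ≤ K a ∧ (((ρ ^ K a) (emb a) : Fin (r + n)) : ℕ) < r :=
      fun a => Nat.find_spec (exists_return ρ (emb a) (hemblt a))
    have hKmin : ∀ a : Fin r, ∀ j, j < K a →
        ¬ (1 ≤ j ∧ (((ρ ^ j) (emb a) : Fin (r + n)) : ℕ) < r) :=
      fun a j hj => Nat.find_min (exists_return ρ (emb a) (hemblt a)) hj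
    set f : Fin r → Fin r := fun a => ⟨(((ρ ^ K a) (emb a) : Fin (r + n)) : ℕ),
      (hKspec a).2⟩ with hfdef
    have hkey : ∀ a b : Fin r, K a ≤ K b → (ρ ^ K a) (emb a) = (ρ ^ K b) (emb b) →
        a = b := by
      intro a b hle heq
      have hdecomp : (ρ ^ K b) (emb b) = (ρ ^ K a) ((ρ ^ (K b - K a)) (emb b)) := by
        conv_lhs => rw [← Nat.add_sub_cancel' hle, pow_add, Equiv.Perm.mul_apply]
      rw [hdecomp] at heq
      have heq2 : emb a = (ρ ^ (K b - K a)) (emb b) := (ρ ^ K a).injective heq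
      have hz : K b - K a = 0 := by
        by_contra hz
        have h1 : 1 ≤ K b - K a := Nat.one_le_iff_ne_zero.mpr hz
        have h2 : K b - K a < K b := by
          have := (hKspec a).1
          omega
        exact hKmin b _ h2 ⟨h1, by rw [← heq2]; exact hemblt a⟩
      have hKab : K a = K b := by omega
      rw [hz, pow_zero] at heq2
      have := congrArg Fin.val heq2
      simp only [Equiv.Perm.coe_one, id_eq, hembval] at this
      exact Fin.ext this
    have hfinj : Function.Injective f := by
      intro a b hab
      have hval := congrArg Fin.val hab
      simp only [hfdef] at hval
      have heq : (ρ ^ K a) (emb a) = (ρ ^ K b) (emb b) := Fin.ext hval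
      rcases Nat.le_total (K a) (K b) with h | h
      · exact hkey a b h heq
      · exact (hkey b a h heq.symm).symm
    set τ : Equiv.Perm (Fin r) :=
      Equiv.ofBijective f (Finite.injective_iff_bijective.mp hfinj) with hτdef
    have hτf : ∀ a, τ a = f a := fun a => rfl
    set σ : Equiv.Perm (Fin (r + n)) := ρ * (extPerm r n τ)⁻¹ with hσdef
    -- basic facts about σ
    have hσ_lt : ∀ x : Fin (r + n), (hx : (x : ℕ) < r) →
        σ x = (ρ ^ K (τ⁻¹ ⟨(x : ℕ), hx⟩)) (emb (τ⁻¹ ⟨(x : ℕ), hx⟩)) → True := fun _ _ _ =>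
      trivial
    have hσ_out : ∀ z : Fin (r + n), ¬ ((z : ℕ) < r) → σ z = ρ z := by
      intro z hz
      rw [hσdef, Equiv.Perm.mul_apply, extPerm_inv, extPerm_of_ge τ⁻¹ hz]
    -- for x ∈ [r]: setup w and its return properties
    have hmain : ∀ x : Fin (r + n), (x : ℕ) < r →
        ∃ Kx, 1 ≤ Kx ∧ (σ ^ Kx) x = x ∧
          ∀ j, 1 ≤ j → j < Kx → ¬ ((((σ ^ j) x : Fin (r + n)) : ℕ) < r) := by
      intro x hx
      set b : Fin r := τ⁻¹ ⟨(x : ℕ), hx⟩ with hb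
      set w : Fin (r + n) := emb b with hwdef
      have hwlt : (w : ℕ) < r := hemblt b
      have hτb : τ b = ⟨(x : ℕ), hx⟩ := by rw [hb]; exact Equiv.apply_symm_apply τ _
      have hfb : (ρ ^ K b) (emb b) = x := by
        have : f b = ⟨(x : ℕ), hx⟩ := by rw [← hτf b, hτb]
        have hv := congrArg Fin.val this
        simp only [hfdef] at hv
        exact Fin.ext hv
      have hσx : σ x = ρ w := by
        rw [hσdef, Equiv.Perm.mul_apply, extPerm_inv]
        congr 1
        rw [extPerm_lt τ⁻¹ hx]
      have hiter : ∀ j, 1 ≤ j → j ≤ K b → (σ ^ j) x = (ρ ^ j) w := by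
        intro j h1 hjK
        obtain ⟨j', rfl⟩ : ∃ j', j = j' + 1 := ⟨j - 1, by omega⟩
        refine iter_eq σ ρ hσ_out x w hσx j' ?_
        intro i hi1 hij
        intro hlt
        exact hKmin b i (by omega) ⟨hi1, hlt⟩
      refine ⟨K b, (hKspec b).1, ?_, ?_⟩
      · rw [hiter (K b) (hKspec b).1 le_rfl, hfb]
      · intro j h1 hj hlt
        rw [hiter j h1 (Nat.le_of_lt hj)] at hlt
        exact hKmin b j hj ⟨h1, hlt⟩
    -- σ^j x ∈ [r] → σ^j x = x
    have hclaim : ∀ x : Fin (r + n), (x : ℕ) < r → ∀ j : ℕ,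
        (((σ ^ j) x : Fin (r + n)) : ℕ) < r → (σ ^ j) x = x := by
      intro x hx
      obtain ⟨Kx, hKx1, hKxe, hKxmin⟩ := hmain x hx
      intro j
      induction j using Nat.strong_induction_on with
      | _ j ih =>
        intro hj
        rcases Nat.lt_or_ge j 1 with h0 | h1
        · interval_cases j
          simp
        rcases Nat.lt_or_ge j Kx with hlt | hge
        · exact absurd hj (hKxmin j h1 hlt)
        · have hsum : j - Kx + Kx = j := by omega
          have hdecomp : (σ ^ j) x = (σ ^ (j - Kx)) x := by
            have h2 : (σ ^ j) x = (σ ^ (j - Kx)) ((σ ^ Kx) x) := by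
              conv_lhs => rw [← hsum, pow_add, Equiv.Perm.mul_apply]
            rw [h2, hKxe]
          rw [hdecomp] at hj ⊢
          exact ih (j - Kx) (by omega) hj
    -- σ is an r-derangement
    have hσmem : σ ∈ rDerSet r n := by
      rw [mem_rDerSet']
      constructor
      · intro x
        by_cases hx : (x : ℕ) < r
        · obtain ⟨Kx, hKx1, hKxe, hKxmin⟩ := hmain x hx
          intro he
          have h1 : σ x = (σ ^ 1) x := by simp
          rcases Nat.lt_or_ge 1 Kx with h | h
          · exact hKxmin 1 le_rfl h (by rw [← h1, he]; exact hx)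
          · -- Kx = 1, so σ x = x means... use that σ x = ρ w ∉ [r]
            have hKx : Kx = 1 := by omega
            -- σ x has val ≥ r? From hσx-type argument: σ x = ρ w with w ∈ [r]
            -- reconstruct: σ x = ρ ((extPerm τ)⁻¹ x), and (extPerm τ)⁻¹ x ∈ [r]
            have hwlt : (((extPerm r n τ)⁻¹ x : Fin (r + n)) : ℕ) < r := by
              rw [extPerm_inv, extPerm_lt τ⁻¹ hx]
              exact (τ⁻¹ ⟨(x : ℕ), hx⟩).is_lt
            have : ¬ ((σ x : ℕ) < r) := by
              rw [hσdef, Equiv.Perm.mul_apply]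
              exact hblk _ hwlt
            rw [he] at this
            exact this hx
        · rw [hσ_out x hx]
          exact hfpf x
      · intro x y hx hy hxy hsc
        obtain ⟨i, _, hie⟩ := Equiv.Perm.SameCycle.exists_pow_eq' hsc
        have hx' := hclaim x hx i (by rw [hie]; exact hy)
        rw [hx'] at hie
        exact hxy hie
    refine ⟨(τ, σ), Finset.mem_product.mpr ⟨Finset.mem_univ _, hσmem⟩, ?_⟩
    simp only [hσdef]
    exact inv_mul_cancel_right ρ (extPerm r n τ)
end
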